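/- arXiv:2505.02150 — 4 statements merged into one kernel-verified Lean document; each statement's English description precedes it below -/
import Mathlib

section
/- For every n ≥ 4, the complete graph K_n remains Hamiltonian-connected after deleting any set of at most n−4 edges; that is, for any edge set F with |F| ≤ n−4 and any two distinct vertices s, t, the graph K_n − F contains a Hamiltonian path from s to t. -/
open SimpleGraph

variable {α : Type*} {G : SimpleGraph α}

lemma insert_vertex {u w v : α} (p : G.Walk u w) (hp : p.IsPath) (hv : v ∉ p.support)
    (d : G.Dart) (hd : d ∈ p.darts) (h1 : G.Adj v d.fst) (h2 : G.Adj v d.snd) :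
    ∃ q : G.Walk u w, q.IsPath ∧ ∀ x, x ∈ q.support ↔ x = v ∨ x ∈ p.support := by
  induction p with
  | nil => simp at hd
  | @cons u b w h p ih =>
    rw [Walk.darts_cons, List.mem_cons] at hd
    rcases hd with hd | hd
    · subst hd
      simp only [Walk.support_cons, List.mem_cons] at hv
      push_neg at hv
      refine ⟨Walk.cons h1.symm (Walk.cons h2 p), ?_, ?_⟩
      · refine Walk.IsPath.cons (Walk.IsPath.cons hp.of_cons hv.2) ?_
        simp only [Walk.support_cons, List.mem_cons]
        push_neg
        exact ⟨fun e => hv.1 e.symm, ((Walk.cons_isPath_iff _ _).mp hp).2⟩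
      · intro x; simp only [Walk.support_cons, List.mem_cons]; tauto
    · have hv' : v ∉ p.support := fun hx => hv (by simp [hx])
      obtain ⟨q, hq, hqs⟩ := ih hp.of_cons hv' hd
      refine ⟨Walk.cons h q, ?_, ?_⟩
      · refine Walk.IsPath.cons hq ?_
        rw [hqs]
        push_neg
        constructor
        · rintro rfl; exact hv (by simp)
        · exact ((Walk.cons_isPath_iff _ _).mp hp).2
      · intro x; simp only [Walk.support_cons, List.mem_cons, hqs]; tauto

lemma countP_or_le {β : Type*} (l : List β) (P Q : β → Bool) :
    l.countP (fun x => P x || Q x) ≤ l.countP P + l.countP Q := by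
  induction l with
  | nil => simp
  | cons a l ih =>
    simp only [List.countP_cons]
    cases hP : P a <;> cases hQ : Q a <;> simp [hP, hQ] <;> omega

lemma countP_mem_le_card {β : Type*} [DecidableEq β] (l : List β) (hl : l.Nodup)
    (X : Finset β) : l.countP (fun x => x ∈ X) ≤ X.card := by
  rw [List.countP_eq_length_filter]
  have h1 : (l.filter (fun x => x ∈ X)).Nodup := hl.filter _
  rw [← List.toFinset_card_of_nodup h1]
  apply Finset.card_le_card
  intro x hx
  rw [List.mem_toFinset, List.mem_filter] at hx
  simpa using hx.2

lemma good_dart {α : Type*} [DecidableEq α] {G : SimpleGraph α} {u w : α} (p : G.Walk u w)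
    (hp : p.IsPath) (X Y : Finset α)
    (hcard : (X.erase w).card + (Y.erase u).card < p.length) :
    ∃ d ∈ p.darts, d.fst ∉ X ∧ d.snd ∉ Y := by
  by_contra hcon
  push_neg at hcon
  have hall : p.darts.countP (fun d => decide (d.fst ∈ X) || decide (d.snd ∈ Y)) =
      p.darts.length := by
    rw [List.countP_eq_length]
    intro d hd
    by_cases h : d.fst ∈ X
    · simp [h]
    · simp [h, hcon d hd h]
  have hw : w ∉ p.darts.map (·.fst) := by
    have h2 := p.map_fst_darts_append
    have h3 : p.support.Nodup := hp.support_nodup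
    rw [← h2] at h3
    have := List.disjoint_of_nodup_append h3
    intro hmem
    exact this hmem (by simp)
  have hu : u ∉ p.darts.map (·.snd) := by
    rw [p.map_snd_darts]
    have h3 : p.support.Nodup := hp.support_nodup
    rw [p.support_eq_cons] at h3
    exact (List.nodup_cons.mp h3).1
  have hfst : p.darts.countP (fun d => decide (d.fst ∈ X)) ≤ (X.erase w).card := by
    have e1 : p.darts.countP (fun d => decide (d.fst ∈ X)) =
        (p.darts.map (·.fst)).countP (fun x => decide (x ∈ X)) := by
      rw [List.countP_map]; rfl
    rw [e1]
    have e2 : (p.darts.map (·.fst)).countP (fun x => decide (x ∈ X)) =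
        (p.darts.map (·.fst)).countP (fun x => decide (x ∈ X.erase w)) := by
      apply List.countP_congr
      intro x hx
      have : x ≠ w := fun h => hw (h ▸ hx)
      simp [Finset.mem_erase, this]
    rw [e2]
    apply countP_mem_le_card
    rw [p.map_fst_darts]
    exact hp.support_nodup.sublist (List.dropLast_sublist _)
  have hsnd : p.darts.countP (fun d => decide (d.snd ∈ Y)) ≤ (Y.erase u).card := by
    have e1 : p.darts.countP (fun d => decide (d.snd ∈ Y)) =
        (p.darts.map (·.snd)).countP (fun x => decide (x ∈ Y)) := by
      rw [List.countP_map]; rfl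
    rw [e1]
    have e2 : (p.darts.map (·.snd)).countP (fun x => decide (x ∈ Y)) =
        (p.darts.map (·.snd)).countP (fun x => decide (x ∈ Y.erase u)) := by
      apply List.countP_congr
      intro x hx
      have : x ≠ u := fun h => hu (h ▸ hx)
      simp [Finset.mem_erase, this]
    rw [e2]
    apply countP_mem_le_card
    rw [p.map_snd_darts]
    exact hp.support_nodup.sublist (List.tail_sublist _)
  have hlen : p.darts.length = p.length := p.length_darts
  have := countP_or_le p.darts (fun d => decide (d.fst ∈ X)) (fun d => decide (d.snd ∈ Y))
  omega
section Main

variable {n : ℕ} (F : Finset (Sym2 (Fin n))) (s t : Fin n)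

lemma mem_filter_edges {a b : Fin n} (V : Finset (Fin n))
    (hf : s(a,b) ∈ F) (hab : a ≠ b) (hne : s(a,b) ≠ s(s,t)) (ha : a ∈ V) (hb : b ∈ V) :
    s(a,b) ∈ F.filter (fun e => ¬ e.IsDiag ∧ e ≠ s(s,t) ∧ e ∈ V.sym2) :=
  Finset.mem_filter.mpr ⟨hf, by simp [Sym2.mk_isDiag_iff, hab, hne, Finset.mk_mem_sym2_iff, ha, hb]⟩

lemma filter_edges_mono {V W : Finset (Fin n)} (hVW : V ⊆ W) :
    F.filter (fun e => ¬ e.IsDiag ∧ e ≠ s(s,t) ∧ e ∈ V.sym2) ⊆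
      F.filter (fun e => ¬ e.IsDiag ∧ e ≠ s(s,t) ∧ e ∈ W.sym2) := by
  intro e he
  rw [Finset.mem_filter] at he ⊢
  obtain ⟨hf, h1, h2, h3⟩ := he
  refine ⟨hf, h1, h2, ?_⟩
  rw [Finset.mem_sym2_iff] at h3 ⊢
  exact fun y hy => hVW (h3 y hy)

lemma main_lemma (hst : s ≠ t) :
    ∀ (k : ℕ) (V : Finset (Fin n)), V.card = k → s ∈ V → t ∈ V →
    (F.filter (fun e => ¬ e.IsDiag ∧ e ≠ s(s,t) ∧ e ∈ V.sym2)).card + 4 ≤ k →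
    ∃ p : ((⊤ : SimpleGraph (Fin n)).deleteEdges ↑F).Walk s t,
      p.IsPath ∧ p.support.toFinset = V := by
  intro k
  induction k using Nat.strong_induction_on with
  | _ k ih =>
  intro V hVk hs ht hFV
  set G := (⊤ : SimpleGraph (Fin n)).deleteEdges (↑F : Set (Sym2 (Fin n))) with hG
  have hadj : ∀ a b : Fin n, a ≠ b → s(a,b) ∉ F → G.Adj a b := by
    intro a b hab hf
    rw [hG]
    simp only [deleteEdges_adj, top_adj, Set.mem_setOf_eq, Finset.coe_sort_coe, Finset.mem_coe]
    exact ⟨hab, hf⟩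
  have htV : t ∈ V.erase s := Finset.mem_erase.mpr ⟨hst.symm, ht⟩
  rcases (show k = 4 ∨ 5 ≤ k by omega) with hk4 | hk5
  · -- base case
    subst hk4
    have hcard0 : (F.filter (fun e => ¬ e.IsDiag ∧ e ≠ s(s,t) ∧ e ∈ V.sym2)) = ∅ := by
      rw [← Finset.card_eq_zero]; omega
    have hnotF : ∀ a b : Fin n, a ∈ V → b ∈ V → a ≠ b → s(a,b) ≠ s(s,t) → s(a,b) ∉ F := by
      intro a b ha hb hab hne hf
      have := mem_filter_edges F s t V hf hab hne ha hb
      rw [hcard0] at this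
      exact absurd this (Finset.notMem_empty _)
    have hW2 : ((V.erase s).erase t).card = 2 := by
      rw [Finset.card_erase_of_mem htV, Finset.card_erase_of_mem hs, hVk]
    obtain ⟨a, b, hab, hW⟩ := Finset.card_eq_two.mp hW2
    have haW : a ∈ (V.erase s).erase t := by rw [hW]; simp
    have hbW : b ∈ (V.erase s).erase t := by rw [hW]; simp
    have hat : a ≠ t := (Finset.mem_erase.mp haW).1
    have has : a ≠ s := (Finset.mem_erase.mp (Finset.mem_erase.mp haW).2).1
    have haV : a ∈ V := (Finset.mem_erase.mp (Finset.mem_erase.mp haW).2).2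
    have hbt : b ≠ t := (Finset.mem_erase.mp hbW).1
    have hbs : b ≠ s := (Finset.mem_erase.mp (Finset.mem_erase.mp hbW).2).1
    have hbV : b ∈ V := (Finset.mem_erase.mp (Finset.mem_erase.mp hbW).2).2
    have h1 : G.Adj s a := hadj s a (Ne.symm has)
      (hnotF s a hs haV (Ne.symm has) (by simp [Sym2.eq_iff]; tauto))
    have h2 : G.Adj a b := hadj a b hab
      (hnotF a b haV hbV hab (by simp [Sym2.eq_iff]; tauto))
    have h3 : G.Adj b t := hadj b t hbt
      (hnotF b t hbV ht hbt (by simp [Sym2.eq_iff]; tauto))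
    refine ⟨Walk.cons h1 (Walk.cons h2 (Walk.cons h3 Walk.nil)), ?_, ?_⟩
    · rw [Walk.isPath_def]
      simp [has.symm, hbs.symm, hst, hab, hat, hbt]
    · have h5 : insert t ((V.erase s).erase t) = V.erase s := Finset.insert_erase htV
      have h6 : insert s (V.erase s) = V := Finset.insert_erase hs
      have hV4 : V = insert s (insert t ({a, b} : Finset (Fin n))) := by
        rw [← h6, ← h5, hW]
      rw [hV4]
      ext x
      simp only [Walk.support_cons, Walk.support_nil, List.toFinset_cons, List.toFinset_nil,
        Finset.mem_insert, List.mem_toFinset, Finset.mem_singleton]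
      simp
      tauto
  · -- inductive case
    set I := (V.erase s).erase t with hI
    have hIcard : I.card = k - 2 := by
      rw [hI, Finset.card_erase_of_mem htV, Finset.card_erase_of_mem hs, hVk]
      omega
    have hImem : ∀ x ∈ I, x ∈ V ∧ x ≠ s ∧ x ≠ t := by
      intro x hx
      rw [hI, Finset.mem_erase, Finset.mem_erase] at hx
      exact ⟨hx.2.2, hx.2.1, hx.1⟩
    have hmemI : ∀ x, x ∈ I ↔ x ≠ s ∧ x ≠ t ∧ x ∈ V := by
      intro x
      rw [hI, Finset.mem_erase, Finset.mem_erase]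
      tauto
    set dF : Fin n → ℕ := fun v => ((V.erase v).filter (fun u => s(v,u) ∈ F)).card with hdF
    have plen : ∀ v ∈ V, ∀ p : G.Walk s t, p.IsPath → p.support.toFinset = V.erase v →
        p.length = k - 2 := by
      intro v hvV p hp hpsupp
      have h1 : p.support.length = p.length + 1 := p.length_support
      have h2 : p.support.toFinset.card = p.support.length :=
        List.toFinset_card_of_nodup hp.support_nodup
      rw [hpsupp, Finset.card_erase_of_mem hvV, hVk] at h2
      omega
    have step : ∀ v ∈ I,
        ((F.filter (fun e => ¬ e.IsDiag ∧ e ≠ s(s,t) ∧ e ∈ (V.erase v).sym2)).card + 4 ≤ k - 1) →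
        (∀ p : G.Walk s t, p.IsPath → p.support.toFinset = V.erase v →
          ∃ d ∈ p.darts, s(v, d.fst) ∉ F ∧ s(v, d.snd) ∉ F) →
        ∃ p : G.Walk s t, p.IsPath ∧ p.support.toFinset = V := by
      intro v hvI hbound hdart
      obtain ⟨hvV, hvs, hvt⟩ := hImem v hvI
      have hsV' : s ∈ V.erase v := Finset.mem_erase.mpr ⟨Ne.symm hvs, hs⟩
      have htV' : t ∈ V.erase v := Finset.mem_erase.mpr ⟨Ne.symm hvt, ht⟩
      have hV'card : (V.erase v).card = k - 1 := by
        rw [Finset.card_erase_of_mem hvV, hVk]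
      obtain ⟨p, hp, hpsupp⟩ := ih (k-1) (by omega) (V.erase v) hV'card hsV' htV' hbound
      obtain ⟨d, hd, hd1, hd2⟩ := hdart p hp hpsupp
      have hfstV : d.fst ∈ V.erase v := by
        rw [← hpsupp]
        exact List.mem_toFinset.mpr (Walk.dart_fst_mem_support_of_mem_darts p hd)
      have hsndV : d.snd ∈ V.erase v := by
        rw [← hpsupp]
        exact List.mem_toFinset.mpr (Walk.dart_snd_mem_support_of_mem_darts p hd)
      have hvp : v ∉ p.support := by
        intro h
        have := List.mem_toFinset.mpr h
        rw [hpsupp] at this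
        exact (Finset.mem_erase.mp this).1 rfl
      have a1 : G.Adj v d.fst := hadj v d.fst (fun h => (Finset.mem_erase.mp hfstV).1 h.symm) hd1
      have a2 : G.Adj v d.snd := hadj v d.snd (fun h => (Finset.mem_erase.mp hsndV).1 h.symm) hd2
      obtain ⟨q, hq, hqs⟩ := insert_vertex p hp hvp d hd a1 a2
      refine ⟨q, hq, ?_⟩
      ext x
      rw [List.mem_toFinset, hqs x, ← List.mem_toFinset, hpsupp, Finset.mem_erase]
      constructor
      · rintro (rfl | ⟨_, h⟩)
        · exact hvV
        · exact h
      · intro hx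
        by_cases hxv : x = v
        · exact Or.inl hxv
        · exact Or.inr ⟨hxv, hx⟩
    by_cases hA : ∀ v ∈ I, dF v = 0
    · -- Subcase A: no interior vertex has a deleted edge
      have hgood : ∀ v ∈ I, ∀ u ∈ V, u ≠ v → s(v,u) ∉ F := by
        intro v hv u hu huv hf
        have hm : u ∈ (V.erase v).filter (fun u => s(v,u) ∈ F) :=
          Finset.mem_filter.mpr ⟨Finset.mem_erase.mpr ⟨huv, hu⟩, hf⟩
        have h1 := Finset.card_pos.mpr ⟨u, hm⟩
        have h2 := hA v hv
        simp only [hdF] at h2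
        omega
      have hFVempty : F.filter (fun e => ¬ e.IsDiag ∧ e ≠ s(s,t) ∧ e ∈ V.sym2) = ∅ := by
        rw [Finset.eq_empty_iff_forall_notMem]
        intro e he
        induction e using Sym2.ind with
        | _ x y =>
          rw [Finset.mem_filter] at he
          obtain ⟨hef, hd, hne, hmem⟩ := he
          rw [Finset.mk_mem_sym2_iff] at hmem
          rw [Sym2.mk_isDiag_iff] at hd
          by_cases hxI : x ∈ I
          · exact hgood x hxI y hmem.2 (fun h => hd h.symm) hef
          · by_cases hyI : y ∈ I
            · refine hgood y hyI x hmem.1 (fun h => hd h) ?_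
              rw [Sym2.eq_swap]
              exact hef
            · have hx : x = s ∨ x = t := by
                by_contra hc
                push_neg at hc
                exact hxI ((hmemI x).mpr ⟨hc.1, hc.2, hmem.1⟩)
              have hy : y = s ∨ y = t := by
                by_contra hc
                push_neg at hc
                exact hyI ((hmemI y).mpr ⟨hc.1, hc.2, hmem.2⟩)
              rcases hx with rfl | rfl <;> rcases hy with rfl | rfl
              · exact hd rfl
              · exact hne rfl
              · exact hne Sym2.eq_swap
              · exact hd rfl
      obtain ⟨v, hvI⟩ : I.Nonempty := by
        rw [← Finset.card_pos, hIcard]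
        omega
      apply step v hvI
      · have hsub := filter_edges_mono F s t (Finset.erase_subset v V)
        have h8 := Finset.card_le_card hsub
        rw [hFVempty] at h8
        simp only [Finset.card_empty, Nat.le_zero] at h8
        omega
      · intro p hp hpsupp
        have hvV := (hImem v hvI).1
        have hlen := plen v hvV p hp hpsupp
        have hdartne : p.darts ≠ [] := by
          intro h
          have h9 := p.length_darts
          rw [h] at h9
          simp at h9
          omega
        set d := p.darts.head hdartne with hdd
        have hd : d ∈ p.darts := List.head_mem hdartne
        have hfst : d.fst ∈ V.erase v := by
          rw [← hpsupp]
          exact List.mem_toFinset.mpr (Walk.dart_fst_mem_support_of_mem_darts p hd)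
        have hsnd : d.snd ∈ V.erase v := by
          rw [← hpsupp]
          exact List.mem_toFinset.mpr (Walk.dart_snd_mem_support_of_mem_darts p hd)
        exact ⟨d, hd,
          hgood v hvI d.fst (Finset.mem_erase.mp hfst).2 (Finset.mem_erase.mp hfst).1,
          hgood v hvI d.snd (Finset.mem_erase.mp hsnd).2 (Finset.mem_erase.mp hsnd).1⟩
    · -- Subcase B
      push_neg at hA
      obtain ⟨v₀, hv₀I, hv₀⟩ := hA
      set J := I.filter (fun v => dF v ≠ 0) with hJ
      obtain ⟨v, hvJ, hmin⟩ := Finset.exists_min_image J dF ⟨v₀, Finset.mem_filter.mpr ⟨hv₀I, hv₀⟩⟩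
      have hvI : v ∈ I := (Finset.mem_filter.mp hvJ).1
      obtain ⟨hvV, hvs, hvt⟩ := hImem v hvI
      have hdv1 : 1 ≤ dF v := Nat.one_le_iff_ne_zero.mpr (Finset.mem_filter.mp hvJ).2
      set N := (I.erase v).filter (fun u => s(v,u) ∈ F) with hN
      set pairF := ({s, t} : Finset (Fin n)).filter (fun u => s(v,u) ∈ F) with hpairF
      set a := N.card with ha
      set b := pairF.card with hb
      have hsplit : V.erase v = (I.erase v) ∪ {s, t} := by
        ext x
        rw [Finset.mem_union, Finset.mem_erase, Finset.mem_erase, hmemI x]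
        simp only [Finset.mem_insert, Finset.mem_singleton]
        constructor
        · rintro ⟨hxv, hxV⟩
          by_cases h1 : x = s
          · tauto
          · by_cases h2 : x = t
            · tauto
            · exact Or.inl ⟨hxv, h1, h2, hxV⟩
        · rintro (⟨hxv, h1, h2, hxV⟩ | rfl | rfl)
          · exact ⟨hxv, hxV⟩
          · exact ⟨Ne.symm hvs, hs⟩
          · exact ⟨Ne.symm hvt, ht⟩
      have hdisjNpair : Disjoint (I.erase v) ({s, t} : Finset (Fin n)) := by
        rw [Finset.disjoint_right]
        intro x hx hxI
        have hmm := (hmemI x).mp (Finset.mem_of_mem_erase hxI)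
        simp only [Finset.mem_insert, Finset.mem_singleton] at hx
        rcases hx with rfl | rfl
        · exact hmm.1 rfl
        · exact hmm.2.1 rfl
      have hdab : dF v = a + b := by
        show ((V.erase v).filter (fun u => s(v,u) ∈ F)).card = a + b
        rw [hsplit, Finset.filter_union,
          Finset.card_union_of_disjoint (Finset.disjoint_filter_filter hdisjNpair)]
      have hb2 : b ≤ 2 := by
        have h1 := Finset.card_filter_le ({s,t} : Finset (Fin n)) (fun u => s(v,u) ∈ F)
        have h2 : ({s,t} : Finset (Fin n)).card ≤ 2 :=
          le_trans (Finset.card_insert_le s {t}) (by simp)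
        rw [← hpairF, ← hb] at h1
        omega
      -- sum of degrees bound
      have hsum : ∑ u ∈ I, dF u ≤
          (F.filter (fun e => ¬ e.IsDiag ∧ e ≠ s(s,t) ∧ e ∈ V.sym2)).card * 2 := by
        have hcs : ∑ u ∈ I, dF u =
            (I.sigma (fun u => (V.erase u).filter (fun w => s(u,w) ∈ F))).card :=
          (Finset.card_sigma _ _).symm
        rw [hcs]
        have hinj := Finset.card_le_card_of_injOn
          (f := fun q : (_ : Fin n) × Fin n => (s(q.1, q.2), decide (q.1 < q.2)))
          (s := I.sigma fun u => (V.erase u).filter (fun w => s(u,w) ∈ F))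
          (t := (F.filter (fun e => ¬ e.IsDiag ∧ e ≠ s(s,t) ∧ e ∈ V.sym2)) ×ˢ
            (Finset.univ : Finset Bool))
          ?_ ?_
        · rw [Finset.card_product] at hinj
          simpa using hinj
        · rintro ⟨u, w⟩ hq
          rw [Finset.mem_coe, Finset.mem_sigma] at hq
          obtain ⟨huI, hw⟩ := hq
          rw [Finset.mem_filter, Finset.mem_erase] at hw
          obtain ⟨⟨hwu, hwV⟩, hf⟩ := hw
          obtain ⟨huV, hus, hut⟩ := hImem u huI
          rw [Finset.mem_coe, Finset.mem_product]
          exact ⟨mem_filter_edges F s t V hf (Ne.symm hwu) (by simp [Sym2.eq_iff]; tauto) huV hwV,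
            Finset.mem_univ _⟩
        · rintro ⟨u, w⟩ hq ⟨u', w'⟩ hq' heq
          simp only [Prod.mk.injEq] at heq
          obtain ⟨h1, h2⟩ := heq
          rw [Sym2.eq_iff] at h1
          rcases h1 with ⟨rfl, rfl⟩ | ⟨rfl, rfl⟩
          · rfl
          · simp only [Finset.mem_coe, Finset.mem_sigma, Finset.mem_filter,
              Finset.mem_erase] at hq
            have huw : w ≠ u := hq.2.1.1
            rcases lt_trichotomy u w with hlt | heqq | hgt
            · have : ¬ (w < u) := not_lt_of_gt hlt
              simp [hlt, this] at h2
            · exact absurd heqq.symm huw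
            · have : ¬ (u < w) := not_lt_of_gt hgt
              simp [hgt, this] at h2
      -- lower bound on the sum
      have hNsubI : insert v N ⊆ I := by
        intro x hx
        rcases Finset.mem_insert.mp hx with rfl | hx
        · exact hvI
        · exact Finset.mem_of_mem_erase (Finset.mem_filter.mp hx).1
      have hvN : v ∉ N := fun h => (Finset.mem_erase.mp (Finset.mem_filter.mp h).1).1 rfl
      have hlow : (a + 1) * dF v ≤ ∑ u ∈ I, dF u := by
        have h1 : ∀ u ∈ insert v N, dF v ≤ dF u := by
          intro u hu
          rcases Finset.mem_insert.mp hu with rfl | hu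
          · exact le_refl _
          · obtain ⟨huIe, hfu⟩ := Finset.mem_filter.mp hu
            have huI : u ∈ I := Finset.mem_of_mem_erase huIe
            have huv : u ≠ v := (Finset.mem_erase.mp huIe).1
            have hvu : v ∈ (V.erase u).filter (fun w => s(u,w) ∈ F) := by
              refine Finset.mem_filter.mpr ⟨Finset.mem_erase.mpr ⟨Ne.symm huv, hvV⟩, ?_⟩
              rw [Sym2.eq_swap]
              exact hfu
            have hdu : dF u ≠ 0 := by
              have h3 := Finset.card_pos.mpr ⟨v, hvu⟩
              simp only [hdF]
              omega
            exact hmin u (Finset.mem_filter.mpr ⟨huI, hdu⟩)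
        have h2 := Finset.card_nsmul_le_sum (insert v N) dF (dF v) h1
        rw [Finset.card_insert_of_notMem hvN, smul_eq_mul] at h2
        calc (a + 1) * dF v = (N.card + 1) * dF v := by rw [ha]
          _ ≤ ∑ u ∈ insert v N, dF u := h2
          _ ≤ ∑ u ∈ I, dF u := Finset.sum_le_sum_of_subset hNsubI
      -- removing v decreases the filtered edge count by at least dF v
      have hreduce : (F.filter (fun e => ¬ e.IsDiag ∧ e ≠ s(s,t) ∧ e ∈ (V.erase v).sym2)).card
          + dF v ≤ (F.filter (fun e => ¬ e.IsDiag ∧ e ≠ s(s,t) ∧ e ∈ V.sym2)).card := by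
        set D := ((V.erase v).filter (fun u => s(v,u) ∈ F)).image (fun u => s(v, u)) with hD
        have hDcard : D.card = dF v := by
          rw [hD, Finset.card_image_of_injOn]
          intro x hx y hy hxy
          rw [Sym2.eq_iff] at hxy
          rcases hxy with ⟨_, h⟩ | ⟨h1, h2⟩
          · exact h
          · exfalso
            rw [Finset.mem_coe, Finset.mem_filter, Finset.mem_erase] at hx
            exact hx.1.1 h2
        have hDsub : D ⊆ F.filter (fun e => ¬ e.IsDiag ∧ e ≠ s(s,t) ∧ e ∈ V.sym2) := by
          intro e he
          obtain ⟨u, hu, rfl⟩ := Finset.mem_image.mp he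
          obtain ⟨huV, hf⟩ := Finset.mem_filter.mp hu
          obtain ⟨huv, huV'⟩ := Finset.mem_erase.mp huV
          exact mem_filter_edges F s t V hf (Ne.symm huv) (by simp [Sym2.eq_iff]; tauto) hvV huV'
        have hsub' := filter_edges_mono F s t (Finset.erase_subset v V)
        have hdisj : Disjoint
            (F.filter (fun e => ¬ e.IsDiag ∧ e ≠ s(s,t) ∧ e ∈ (V.erase v).sym2)) D := by
          rw [Finset.disjoint_left]
          intro e he heD
          obtain ⟨u, hu, rfl⟩ := Finset.mem_image.mp heD
          have h3 := (Finset.mem_filter.mp he).2.2.2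
          rw [Finset.mem_sym2_iff] at h3
          have h4 := h3 v (Sym2.mem_mk_left v u)
          exact (Finset.mem_erase.mp h4).1 rfl
        have h5 := Finset.card_le_card (Finset.union_subset hsub' hDsub)
        rw [Finset.card_union_of_disjoint hdisj, hDcard] at h5
        exact h5
      -- key arithmetic
      have hkey : 2 * a + b + 3 ≤ k := by
        by_contra hcon
        push_neg at hcon
        have h1 : (a + 1) * (a + b) ≤
            (F.filter (fun e => ¬ e.IsDiag ∧ e ≠ s(s,t) ∧ e ∈ V.sym2)).card * 2 := by
          rw [hdab] at hlow
          exact le_trans hlow hsum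
        have hexp : (a + 1) * (a + b) = a * a + a * b + a + b := by ring
        rcases Nat.lt_or_ge a 3 with h3 | h3
        · interval_cases a <;> omega
        · have h4 : 3 * a ≤ a * a := Nat.mul_le_mul_right a h3
          have h5 : b ≤ a * b := Nat.le_mul_of_pos_left b (by omega)
          have h6 : 3 * a + b + a + b ≤ (a + 1) * (a + b) := by
            rw [hexp]
            exact add_le_add (add_le_add (add_le_add h4 h5) le_rfl) le_rfl
          have h7 := le_trans h6 h1
          omega
      apply step v hvI
      · omega
      · intro p hp hpsupp
        have hlen := plen v hvV p hp hpsupp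
        have hBveq : (V.erase v).filter (fun u => s(v,u) ∈ F) = N ∪ pairF := by
          rw [hsplit, Finset.filter_union]
        have het : (((V.erase v).filter (fun u => s(v,u) ∈ F)).erase t).card
            ≤ a + (pairF.erase t).card := by
          rw [hBveq, Finset.erase_union_distrib]
          refine le_trans (Finset.card_union_le _ _) ?_
          have h9 := Finset.card_le_card (Finset.erase_subset t N)
          omega
        have hes : (((V.erase v).filter (fun u => s(v,u) ∈ F)).erase s).card
            ≤ a + (pairF.erase s).card := by
          rw [hBveq, Finset.erase_union_distrib]
          refine le_trans (Finset.card_union_le _ _) ?_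
          have h9 := Finset.card_le_card (Finset.erase_subset s N)
          omega
        have hpair : (pairF.erase t).card + (pairF.erase s).card ≤ b := by
          have hsub : (pairF.erase t) ∪ (pairF.erase s) ⊆ pairF :=
            Finset.union_subset (Finset.erase_subset _ _) (Finset.erase_subset _ _)
          have hdisj2 : Disjoint (pairF.erase t) (pairF.erase s) := by
            rw [Finset.disjoint_left]
            intro x hx1 hx2
            have e1 := Finset.mem_erase.mp hx1
            have e2 := Finset.mem_erase.mp hx2
            have hxst : x ∈ ({s,t} : Finset (Fin n)) :=
              Finset.mem_of_mem_filter x (Finset.mem_of_mem_erase hx1)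
            simp only [Finset.mem_insert, Finset.mem_singleton] at hxst
            rcases hxst with rfl | rfl
            · exact e2.1 rfl
            · exact e1.1 rfl
          have h7 := Finset.card_union_of_disjoint hdisj2
          have h8 := Finset.card_le_card hsub
          omega
        obtain ⟨d, hd, hd1, hd2⟩ := good_dart p hp
          ((V.erase v).filter (fun u => s(v,u) ∈ F))
          ((V.erase v).filter (fun u => s(v,u) ∈ F))
          (by rw [hlen]; omega)
        have hfst : d.fst ∈ V.erase v := by
          rw [← hpsupp]
          exact List.mem_toFinset.mpr (Walk.dart_fst_mem_support_of_mem_darts p hd)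
        have hsnd : d.snd ∈ V.erase v := by
          rw [← hpsupp]
          exact List.mem_toFinset.mpr (Walk.dart_snd_mem_support_of_mem_darts p hd)
        refine ⟨d, hd, ?_, ?_⟩
        · intro hf
          exact hd1 (Finset.mem_filter.mpr ⟨hfst, hf⟩)
        · intro hf
          exact hd2 (Finset.mem_filter.mpr ⟨hsnd, hf⟩)

end Main

/-- For every `n ≥ 4`, the complete graph `K_n` remains Hamiltonian-connected after deleting
any set of at most `n - 4` edges. -/
theorem stmt0 (n : ℕ) (hn : 4 ≤ n) (F : Finset (Sym2 (Fin n))) (hF : F.card ≤ n - 4)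
    (s t : Fin n) (hst : s ≠ t) :
    ∃ p : ((⊤ : SimpleGraph (Fin n)).deleteEdges ↑F).Walk s t, p.IsHamiltonian := by
  have hcard : (Finset.univ : Finset (Fin n)).card = n := by simp
  have hfilt : (F.filter (fun e => ¬ e.IsDiag ∧ e ≠ s(s,t) ∧
      e ∈ (Finset.univ : Finset (Fin n)).sym2)).card + 4 ≤ n := by
    have := Finset.card_filter_le F (fun e => ¬ e.IsDiag ∧ e ≠ s(s,t) ∧
      e ∈ (Finset.univ : Finset (Fin n)).sym2)
    omega
  obtain ⟨p, hp, hsupp⟩ := main_lemma F s t hst n Finset.univ hcard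
    (Finset.mem_univ s) (Finset.mem_univ t) hfilt
  refine ⟨p, hp.isHamiltonian_iff.mpr ?_⟩
  intro w
  have : w ∈ p.support.toFinset := by rw [hsupp]; exact Finset.mem_univ w
  simpa using this
end

section
/- For n ≥ 4 with n ≠ 7, for any edge set F of K_n with |F| ≤ n−4 and any four distinct vertices s₁, s₂, t₁, t₂, the graph K_n − F contains two vertex-disjoint paths, one from s₁ to t₁ and one from s₂ to t₂, that together cover all n vertices. -/
open SimpleGraph

/-- A paired 2-disjoint path cover of `G` for sources `s₁, s₂` and sinks `t₁, t₂`: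
two vertex-disjoint paths `s₁ → t₁` and `s₂ → t₂` covering all vertices of `G`. -/
def HasPaired2DPC {V : Type*} (G : SimpleGraph V) (s₁ t₁ s₂ t₂ : V) : Prop :=
  ∃ (p : G.Walk s₁ t₁) (q : G.Walk s₂ t₂), p.IsPath ∧ q.IsPath ∧
    (∀ v, v ∈ p.support → v ∉ q.support) ∧ (∀ v, v ∈ p.support ∨ v ∈ q.support)

section DPCAux

open List Finset

set_option linter.unusedSectionVars false

variable {V : Type*} [DecidableEq V]

/-- Edge `{a,b}` is usable: endpoints distinct and not a fault. -/
def Gd (F : Finset (Sym2 V)) (a b : V) : Prop := a ≠ b ∧ s(a, b) ∉ F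

lemma Gd.symm {F : Finset (Sym2 V)} {a b : V} (h : Gd F a b) : Gd F b a :=
  ⟨h.1.symm, by rw [Sym2.eq_swap]; exact h.2⟩

/-- `l` is a fault-free path from `x` to `y`. -/
def PathL (F : Finset (Sym2 V)) (x y : V) (l : List V) : Prop :=
  l.Chain' (Gd F) ∧ l.Nodup ∧ l.head? = some x ∧ l.getLast? = some y

/-- A fault-free Hamiltonian `x`–`y` path on vertex set `S`. -/
def HamOn (F : Finset (Sym2 V)) (S : Finset V) (x y : V) : Prop :=
  ∃ l, PathL F x y l ∧ ∀ u, u ∈ l ↔ u ∈ S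

/-- A paired 2-disjoint-path cover of the vertex set `S`. -/
def DPCOn (F : Finset (Sym2 V)) (S : Finset V) (s₁ t₁ s₂ t₂ : V) : Prop :=
  ∃ l₁ l₂, PathL F s₁ t₁ l₁ ∧ PathL F s₂ t₂ l₂ ∧ (∀ u, u ∈ l₁ → u ∉ l₂) ∧
    ∀ u, (u ∈ l₁ ∨ u ∈ l₂) ↔ u ∈ S

lemma PathL.reverse {F : Finset (Sym2 V)} {x y : V} {l : List V} (h : PathL F x y l) :
    PathL F y x l.reverse := by
  obtain ⟨hc, hn, hh, hl⟩ := h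
  refine ⟨?_, List.nodup_reverse.mpr hn, by simpa using hl, by simpa using hh⟩
  unfold List.Chain' at hc ⊢
  rw [List.isChain_reverse]
  exact hc.imp (fun {a b} hab => Gd.symm hab)

lemma PathL.imp {F F' : Finset (Sym2 V)} {x y : V} {l : List V}
    (hFF : ∀ a b : V, Gd F a b → Gd F' a b) (h : PathL F x y l) : PathL F' x y l :=
  ⟨h.1.imp (fun {a b} hab => hFF a b hab), h.2.1, h.2.2⟩

lemma PathL.two_le {F : Finset (Sym2 V)} {x y : V} {l : List V} (h : PathL F x y l)
    (hxy : x ≠ y) : 2 ≤ l.length := by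
  obtain ⟨_, _, hh, hl⟩ := h
  match l with
  | [] => simp at hh
  | [a] => simp at hh hl; exact absurd (hh.symm.trans hl) hxy
  | a :: b :: t => simp

/-- Chain helper for building a path `x :: ms ++ [y]`. -/
lemma chain_mids (F : Finset (Sym2 V)) (y : V) :
    ∀ (ms : List V) (x : V), ms.Nodup → x ∉ ms → y ∉ ms → x ≠ y →
    (∀ u ∈ ms, ∀ z, (z ∈ ms ∨ z = x ∨ z = y) → u ≠ z → s(u, z) ∉ F) →
    (ms = [] → s(x, y) ∉ F) → List.Chain' (Gd F) (x :: ms ++ [y]) := by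
  intro ms
  induction ms with
  | nil =>
    intro x _ _ _ hxy _ hspec
    simpa [List.Chain', List.isChain_cons_cons, Gd] using (⟨hxy, hspec rfl⟩ : x ≠ y ∧ s(x, y) ∉ F)
  | cons m ms ih =>
    intro x hnd hx hy hxy hgood _
    have hxm : x ≠ m := by rintro rfl; exact hx (List.mem_cons_self)
    have h1 : Gd F x m := by
      refine ⟨hxm, ?_⟩
      rw [Sym2.eq_swap]
      exact hgood m (List.mem_cons_self) x (Or.inr (Or.inl rfl)) hxm.symm
    have hmy : m ≠ y := by rintro rfl; exact hy (List.mem_cons_self)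
    have h2 := ih m (List.nodup_cons.mp hnd).2 (List.nodup_cons.mp hnd).1
      (fun hm => hy (List.mem_cons_of_mem _ hm)) hmy
      (fun u hu z hz huz => hgood u (List.mem_cons_of_mem _ hu) z
        (by rcases hz with h | h | h
            · exact Or.inl (List.mem_cons_of_mem _ h)
            · exact Or.inl (h ▸ List.mem_cons_self)
            · exact Or.inr (Or.inr h)) huz)
      (fun _ => hgood m (List.mem_cons_self) y (Or.inr (Or.inr rfl)) hmy)
    exact List.isChain_cons_cons.mpr ⟨h1, h2⟩

/-- Building a path `x :: ms ++ [y]` through intermediate vertices `ms`. -/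
lemma midsPath {F : Finset (Sym2 V)} {x y : V} {ms : List V} (hnd : ms.Nodup)
    (hx : x ∉ ms) (hy : y ∉ ms) (hxy : x ≠ y)
    (hgood : ∀ u ∈ ms, ∀ z, (z ∈ ms ∨ z = x ∨ z = y) → u ≠ z → s(u, z) ∉ F)
    (hspec : ms = [] → s(x, y) ∉ F) :
    PathL F x y (x :: ms ++ [y]) ∧ ∀ u, u ∈ x :: ms ++ [y] ↔ (u = x ∨ u = y ∨ u ∈ ms) := by
  refine ⟨⟨chain_mids F y ms x hnd hx hy hxy hgood hspec, ?_, rfl, ?_⟩, ?_⟩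
  · rw [List.cons_append, List.nodup_cons]
    refine ⟨?_, List.nodup_append.mpr ⟨hnd, List.nodup_singleton y, ?_⟩⟩
    · simp only [List.mem_append, List.mem_singleton]
      rintro (h | rfl)
      · exact hx h
      · exact hxy rfl
    · intro a ha b hb; simp only [List.mem_singleton] at hb; subst hb; rintro rfl; exact hy ha
  · rw [show x :: ms ++ [y] = (x :: ms) ++ [y] by simp, List.getLast?_concat]
  · intro u
    simp only [List.cons_append, List.mem_cons, List.mem_append, List.mem_singleton]
    tauto


/-- Either some adjacent pair avoids `p`, or at least half the list satisfies `p`. -/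
lemma findPair (p : V → Prop) [DecidablePred p] :
    ∀ l : List V, (∃ l₁ a b l₂, l = l₁ ++ a :: b :: l₂ ∧ ¬p a ∧ ¬p b) ∨
      l.length ≤ 2 * l.countP (fun x => decide (p x)) + 1 := by
  suffices H : ∀ (n : ℕ) (l : List V), l.length ≤ n →
      ((∃ l₁ a b l₂, l = l₁ ++ a :: b :: l₂ ∧ ¬p a ∧ ¬p b) ∨
      l.length ≤ 2 * l.countP (fun x => decide (p x)) + 1) by
    intro l; exact H l.length l le_rfl
  intro n
  induction n with
  | zero => intro l hl; right; omega
  | succ n IH =>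
  intro l hl
  match l with
  | [] => right; simp
  | [a] => right; simp
  | a :: b :: t =>
    simp only [List.length_cons] at hl
    by_cases hpa : p a
    · rcases IH (b :: t) (by simp; omega) with ⟨l₁, c, d, l₂, hsp, hc, hd⟩ | hbound
      · exact Or.inl ⟨a :: l₁, c, d, l₂, by rw [hsp]; rfl, hc, hd⟩
      · right
        have : (a :: b :: t).countP (fun x => decide (p x)) =
            (b :: t).countP (fun x => decide (p x)) + 1 := by
          rw [List.countP_cons]; simp [hpa]
        rw [this]; simp only [List.length_cons] at hbound ⊢; omega
    · by_cases hpb : p b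
      · rcases IH t (by omega) with ⟨l₁, c, d, l₂, hsp, hc, hd⟩ | hbound
        · exact Or.inl ⟨a :: b :: l₁, c, d, l₂, by rw [hsp]; rfl, hc, hd⟩
        · right
          have : (a :: b :: t).countP (fun x => decide (p x)) =
              t.countP (fun x => decide (p x)) + 1 := by
            rw [List.countP_cons, List.countP_cons]; simp [hpa, hpb]
          rw [this]; simp only [List.length_cons]; omega
      · exact Or.inl ⟨[], a, b, t, rfl, hpa, hpb⟩

/-- Bound the count of a predicate on a nodup list by the card of a covering finset. -/
lemma countP_le_card {p : V → Prop} [DecidablePred p] {l : List V} (hl : l.Nodup)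
    {B : Finset V} (h : ∀ u ∈ l, p u → u ∈ B) :
    l.countP (fun x => decide (p x)) ≤ B.card := by
  rw [List.countP_eq_length_filter]
  rw [← List.toFinset_card_of_nodup (hl.filter _)]
  apply Finset.card_le_card
  intro u hu
  rw [List.mem_toFinset, List.mem_filter] at hu
  exact h u hu.1 (by simpa using hu.2)


lemma getLast?_append_cons (A B : List V) (b : V) :
    (A ++ b :: B).getLast? = (b :: B).getLast? := by
  rw [List.getLast?_append]
  rw [List.getLast?_eq_getLast (l := b :: B) (by simp)]; rfl

/-- Insert a vertex `v` between a compatible adjacent pair. -/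
lemma pathInsert {F : Finset (Sym2 V)} {x y v : V} {l l₁ l₂ : List V} {a b : V}
    (h : PathL F x y l) (hsp : l = l₁ ++ a :: b :: l₂) (hv : v ∉ l)
    (hva : s(v, a) ∉ F) (hvb : s(v, b) ∉ F) :
    ∃ L, PathL F x y L ∧ ∀ u, u ∈ L ↔ u = v ∨ u ∈ l := by
  obtain ⟨hc, hn, hh, hl⟩ := h
  subst hsp
  have hmem_a : a ∈ l₁ ++ a :: b :: l₂ := by simp
  have hmem_b : b ∈ l₁ ++ a :: b :: l₂ := by simp
  have hvane : v ≠ a := fun hh => hv (hh ▸ hmem_a)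
  have hvbne : v ≠ b := fun hh => hv (hh ▸ hmem_b)
  refine ⟨l₁ ++ a :: v :: b :: l₂, ⟨?_, ?_, ?_, ?_⟩, ?_⟩
  · unfold List.Chain' at hc ⊢
    rw [List.isChain_split] at hc ⊢
    refine ⟨hc.1, ?_⟩
    rw [List.isChain_cons_cons] at hc ⊢
    refine ⟨⟨hvane.symm, by rw [Sym2.eq_swap]; exact hva⟩, ?_⟩
    rw [List.isChain_cons_cons]
    exact ⟨⟨hvbne, hvb⟩, hc.2.2⟩
  · have : l₁ ++ a :: v :: b :: l₂ = (l₁ ++ [a]) ++ v :: (b :: l₂) := by simp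
    rw [this, List.nodup_middle]
    have horig : l₁ ++ a :: b :: l₂ = (l₁ ++ [a]) ++ b :: l₂ := by simp
    rw [horig] at hn hv
    exact List.nodup_cons.mpr ⟨hv, hn⟩
  · rw [← hh]
    cases l₁ <;> simp
  · rw [← hl]
    have h1 : l₁ ++ a :: v :: b :: l₂ = (l₁ ++ [a, v]) ++ b :: l₂ := by simp
    have h2 : l₁ ++ a :: b :: l₂ = (l₁ ++ [a]) ++ b :: l₂ := by simp
    rw [h1, h2, _root_.getLast?_append_cons, _root_.getLast?_append_cons]
  · intro u; simp; tauto

/-- Replace `g₁` by `g₁, v, g₂` inside a path (core version: `g₁` not last). -/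
lemma pathReplaceCore {F F' : Finset (Sym2 V)} {x y v g₁ g₂ : V} {l₁ l₂ : List V}
    (h : PathL F' x y (l₁ ++ g₁ :: l₂)) (hne : l₂ ≠ [])
    (hsub : ∀ a b : V, Gd F' a b → Gd F a b)
    (htr : ∀ u ∈ l₁ ++ g₁ :: l₂, Gd F' u g₁ → Gd F u g₂)
    (hg₁v : Gd F g₁ v) (hvg₂ : Gd F v g₂)
    (hv : v ∉ l₁ ++ g₁ :: l₂) (hg₂ : g₂ ∉ l₁ ++ g₁ :: l₂) (hvg₂ne : v ≠ g₂) :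
    PathL F x y (l₁ ++ g₁ :: v :: g₂ :: l₂) ∧
      ∀ u, u ∈ l₁ ++ g₁ :: v :: g₂ :: l₂ ↔ u = v ∨ u = g₂ ∨ u ∈ l₁ ++ g₁ :: l₂ := by
  obtain ⟨hc, hn, hh, hl⟩ := h
  obtain ⟨c, t, rfl⟩ : ∃ c t, l₂ = c :: t := by
    cases l₂ with
    | nil => exact absurd rfl hne
    | cons c t => exact ⟨c, t, rfl⟩
  have hcmem : c ∈ l₁ ++ g₁ :: c :: t := by simp
  refine ⟨⟨?_, ?_, ?_, ?_⟩, ?_⟩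
  · unfold List.Chain' at hc ⊢
    rw [List.isChain_split] at hc ⊢
    refine ⟨(hc.1).imp (fun {a b} => hsub a b), ?_⟩
    rw [List.isChain_cons_cons] at hc
    have hg₁c : Gd F' g₁ c := hc.2.1
    have hcg₂ : Gd F c g₂ := htr c hcmem hg₁c.symm
    rw [List.isChain_cons_cons]
    refine ⟨hg₁v, ?_⟩
    rw [List.isChain_cons_cons]
    refine ⟨hvg₂, ?_⟩
    rw [List.isChain_cons_cons]
    exact ⟨hcg₂.symm, (hc.2.2).imp (fun {a b} => hsub a b)⟩
  · have e1 : l₁ ++ g₁ :: v :: g₂ :: c :: t = (l₁ ++ [g₁]) ++ v :: (g₂ :: c :: t) := by simp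
    rw [e1, List.nodup_middle, List.nodup_cons]
    have e2 : (l₁ ++ [g₁]) ++ g₂ :: c :: t = (l₁ ++ [g₁]) ++ g₂ :: (c :: t) := rfl
    constructor
    · intro hmem
      rw [List.mem_append, List.mem_cons] at hmem
      rcases hmem with h1 | h1 | h1
      · exact hv (by simp at h1 ⊢; tauto)
      · exact hvg₂ne h1
      · exact hv (by simp [h1])
    · rw [e2, List.nodup_middle, List.nodup_cons]
      constructor
      · intro hmem
        apply hg₂
        simp at hmem ⊢; tauto
      · have : (l₁ ++ [g₁]) ++ c :: t = l₁ ++ g₁ :: c :: t := by simp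
        rw [this]; exact hn
  · rw [← hh]; cases l₁ <;> simp
  · rw [← hl]
    have h1 : l₁ ++ g₁ :: v :: g₂ :: c :: t = (l₁ ++ [g₁, v, g₂]) ++ c :: t := by simp
    have h2 : l₁ ++ g₁ :: c :: t = (l₁ ++ [g₁]) ++ c :: t := by simp
    rw [h1, h2, _root_.getLast?_append_cons, _root_.getLast?_append_cons]
  · intro u; simp; tauto

/-- Replace `g₁` by the segment `g₁,v,g₂` (in suitable orientation) in a path. -/
lemma pathReplace {F F' : Finset (Sym2 V)} {x y v g₁ g₂ : V} {l : List V}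
    (h : PathL F' x y l) (hxy : x ≠ y) (hg₁ : g₁ ∈ l)
    (hsub : ∀ a b : V, Gd F' a b → Gd F a b)
    (htr : ∀ u ∈ l, Gd F' u g₁ → Gd F u g₂)
    (hg₁v : Gd F g₁ v) (hvg₂ : Gd F v g₂)
    (hv : v ∉ l) (hg₂ : g₂ ∉ l) (hvg₂ne : v ≠ g₂) :
    ∃ L, PathL F x y L ∧ ∀ u, u ∈ L ↔ u = v ∨ u = g₂ ∨ u ∈ l := by
  obtain ⟨l₁, l₂, rfl⟩ := List.append_of_mem hg₁
  cases hl₂ : l₂ with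
  | cons c t =>
    subst hl₂
    obtain ⟨hP, hmem⟩ := pathReplaceCore h (by simp) hsub htr hg₁v hvg₂ hv hg₂ hvg₂ne
    exact ⟨_, hP, hmem⟩
  | nil =>
    subst hl₂
    have hrev : PathL F' y x (g₁ :: l₁.reverse) := by
      have := h.reverse
      rwa [show (l₁ ++ [g₁]).reverse = g₁ :: l₁.reverse by simp] at this
    have hl₁ne : l₁ ≠ [] := by
      rintro rfl
      obtain ⟨_, _, hh, hl⟩ := h
      simp at hh hl
      exact hxy (hh.symm.trans hl)
    have hrev' : PathL F' y x ([] ++ g₁ :: l₁.reverse) := by simpa using hrev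
    have hmemrev : ∀ u, u ∈ ([] : List V) ++ g₁ :: l₁.reverse ↔ u ∈ l₁ ++ [g₁] := by
      intro u; simp; tauto
    obtain ⟨hP, hmem⟩ := pathReplaceCore (l₂ := l₁.reverse) hrev'
      (by simpa using hl₁ne) hsub
      (fun u hu => htr u ((hmemrev u).mp hu))
      hg₁v hvg₂ (fun hc => hv ((hmemrev v).mp hc)) (fun hc => hg₂ ((hmemrev g₂).mp hc)) hvg₂ne
    refine ⟨(([] : List V) ++ g₁ :: v :: g₂ :: l₁.reverse).reverse, hP.reverse, ?_⟩
    intro u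
    rw [List.mem_reverse, hmem u, hmemrev u]
/-- Fault-degree of `u` within `S`. -/
def dgS (F : Finset (Sym2 V)) (S : Finset V) (u : V) : ℕ :=
  ((S.erase u).filter (fun w => s(u, w) ∈ F)).card

lemma fault_drop (F : Finset (Sym2 V)) (S : Finset V) (v : V) (hv : v ∈ S) :
    dgS F S v + (F ∩ (S.erase v).sym2).card ≤ (F ∩ S.sym2).card := by
  classical
  set A := F ∩ (S.erase v).sym2 with hA
  set Bset := ((S.erase v).filter (fun w => s(v, w) ∈ F)).image (fun w => s(v, w)) with hB
  have hBcard : Bset.card = dgS F S v := by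
    rw [hB, dgS]
    apply Finset.card_image_of_injOn
    intro w hw w' hw' hww
    simp only [Finset.mem_coe, Finset.mem_filter, Finset.mem_erase] at hw hw'
    rcases Sym2.eq_iff.mp hww with ⟨_, h⟩ | ⟨h1, h2⟩
    · exact h
    · exact h2.trans h1
  have hsub : A ∪ Bset ⊆ F ∩ S.sym2 := by
    intro e he
    rcases Finset.mem_union.mp he with he | he
    · rw [hA, Finset.mem_inter] at he
      exact Finset.mem_inter.mpr ⟨he.1, Finset.sym2_mono (Finset.erase_subset _ _) he.2⟩
    · rw [hB] at he
      obtain ⟨w, hw, rfl⟩ := Finset.mem_image.mp he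
      simp only [Finset.mem_filter, Finset.mem_erase] at hw
      exact Finset.mem_inter.mpr ⟨hw.2, Finset.mk_mem_sym2_iff.mpr ⟨hv, hw.1.2⟩⟩
  have hdisj : Disjoint A Bset := by
    rw [Finset.disjoint_left]
    intro e heA heB
    rw [hB] at heB
    obtain ⟨w, _, rfl⟩ := Finset.mem_image.mp heB
    rw [hA, Finset.mem_inter, Finset.mem_sym2_iff] at heA
    have := heA.2 v (by simp [Sym2.mem_iff])
    exact (Finset.mem_erase.mp this).1 rfl
  calc dgS F S v + A.card = Bset.card + A.card := by rw [hBcard]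
    _ = (A ∪ Bset).card := by rw [Finset.card_union_of_disjoint hdisj]; omega
    _ ≤ (F ∩ S.sym2).card := Finset.card_le_card hsub

lemma dg_pos (F : Finset (Sym2 V)) (S : Finset V) {u w : V} (hw : w ∈ S) (hne : w ≠ u)
    (hf : s(u, w) ∈ F) : 1 ≤ dgS F S u := by
  rw [dgS]
  have : w ∈ (S.erase u).filter (fun w => s(u, w) ∈ F) :=
    Finset.mem_filter.mpr ⟨Finset.mem_erase.mpr ⟨hne, hw⟩, hf⟩
  exact Finset.card_pos.mpr ⟨w, this⟩

/-- Length of a Ham list equals the card of the set. -/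
lemma ham_length {F : Finset (Sym2 V)} {S : Finset V} {x y : V} {l : List V}
    (hP : PathL F x y l) (hmem : ∀ u, u ∈ l ↔ u ∈ S) : l.length = S.card := by
  rw [← List.toFinset_card_of_nodup hP.2.1]
  congr 1
  ext u
  rw [List.mem_toFinset, hmem]

/-- Insert `v` into a Hamiltonian path on `S'` when faults at `v` are few. -/
lemma insertHam {F : Finset (Sym2 V)} {S' : Finset V} {x y v : V}
    (h : HamOn F S' x y) (hv : v ∉ S')
    (hB : 2 * ((S'.filter (fun u => s(v, u) ∈ F)).card) + 2 ≤ S'.card) :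
    HamOn F (insert v S') x y := by
  obtain ⟨l, hP, hmem⟩ := h
  have hlen := ham_length hP hmem
  rcases findPair (fun u => s(v, u) ∈ F) l with ⟨l₁, a, b, l₂, hsp, ha, hb⟩ | hbound
  · have hvl : v ∉ l := fun hc => hv ((hmem v).mp hc)
    obtain ⟨L, hP', hmem'⟩ := pathInsert hP hsp hvl ha hb
    refine ⟨L, hP', fun u => ?_⟩
    rw [hmem' u, Finset.mem_insert, hmem u]
  · exfalso
    have hcount : l.countP (fun u => decide (s(v, u) ∈ F)) ≤
        (S'.filter (fun u => s(v, u) ∈ F)).card := by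
      apply countP_le_card hP.2.1
      intro u hu hpu
      exact Finset.mem_filter.mpr ⟨(hmem u).mp hu, hpu⟩
    omega

/-- Insert `v` into a 2-DPC on `S'` when faults at `v` are few. -/
lemma insertDPC {F : Finset (Sym2 V)} {S' : Finset V} {s₁ t₁ s₂ t₂ v : V}
    (h : DPCOn F S' s₁ t₁ s₂ t₂) (hv : v ∉ S')
    (hB : 2 * ((S'.filter (fun u => s(v, u) ∈ F)).card) + 3 ≤ S'.card) :
    DPCOn F (insert v S') s₁ t₁ s₂ t₂ := by
  classical
  obtain ⟨l₁, l₂, hP₁, hP₂, hdisj, hmem⟩ := h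
  have hn12 : (l₁ ++ l₂).Nodup := by
    rw [List.nodup_append]
    exact ⟨hP₁.2.1, hP₂.2.1, fun a ha b hb hab => hdisj a ha (hab ▸ hb)⟩
  have hlen : l₁.length + l₂.length = S'.card := by
    have : (l₁ ++ l₂).length = S'.card := by
      rw [← List.toFinset_card_of_nodup hn12]
      congr 1
      ext u
      rw [List.mem_toFinset, List.mem_append, hmem]
    simpa using this
  have hcount : (l₁ ++ l₂).countP (fun u => decide (s(v, u) ∈ F)) ≤
      (S'.filter (fun u => s(v, u) ∈ F)).card := by
    apply countP_le_card hn12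
    intro u hu hpu
    exact Finset.mem_filter.mpr ⟨(hmem u).mp (List.mem_append.mp hu), hpu⟩
  rw [List.countP_append] at hcount
  have hv₁ : v ∉ l₁ := fun hc => hv ((hmem v).mp (Or.inl hc))
  have hv₂ : v ∉ l₂ := fun hc => hv ((hmem v).mp (Or.inr hc))
  rcases findPair (fun u => s(v, u) ∈ F) l₁ with ⟨m₁, a, b, m₂, hsp, ha, hb⟩ | hbound₁
  · obtain ⟨L, hP', hmem'⟩ := pathInsert hP₁ hsp hv₁ ha hb
    refine ⟨L, l₂, hP', hP₂, fun u hu => ?_, fun u => ?_⟩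
    · rcases (hmem' u).mp hu with rfl | hu'
      · exact hv₂
      · exact hdisj u hu'
    · rw [Finset.mem_insert, ← hmem u, hmem' u]; tauto
  · rcases findPair (fun u => s(v, u) ∈ F) l₂ with ⟨m₁, a, b, m₂, hsp, ha, hb⟩ | hbound₂
    · obtain ⟨L, hP', hmem'⟩ := pathInsert hP₂ hsp hv₂ ha hb
      refine ⟨l₁, L, hP₁, hP', fun u hu hu2 => ?_, fun u => ?_⟩
      · rcases (hmem' u).mp hu2 with rfl | hu'
        · exact hv₁ hu
        · exact hdisj u hu hu'
      · rw [Finset.mem_insert, ← hmem u, hmem' u]; tauto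
    · exfalso; omega

/-- Expand a Hamiltonian path w.r.t. the enlarged fault set `F'` into one for `F`
by replacing `g₁` with the segment `g₁, v, g₂`. -/
lemma replaceHam {F F' : Finset (Sym2 V)} {S' : Finset V} {x y v g₁ g₂ : V}
    (h : HamOn F' S' x y) (hxy : x ≠ y) (hg₁ : g₁ ∈ S')
    (hsub : F ⊆ F')
    (htr : ∀ u ∈ S', s(g₂, u) ∈ F → s(g₁, u) ∈ F')
    (hvS : v ∉ S') (hg₂S : g₂ ∉ S') (hvg₂ne : v ≠ g₂)
    (hg₁v : Gd F g₁ v) (hvg₂ : Gd F v g₂) :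
    HamOn F (insert v (insert g₂ S')) x y := by
  obtain ⟨l, hP, hmem⟩ := h
  have hsub' : ∀ a b : V, Gd F' a b → Gd F a b :=
    fun a b hab => ⟨hab.1, fun hc => hab.2 (hsub hc)⟩
  have htr' : ∀ u ∈ l, Gd F' u g₁ → Gd F u g₂ := by
    intro u hu hug₁
    have huS : u ∈ S' := (hmem u).mp hu
    refine ⟨fun hc => hg₂S (hc ▸ huS), fun hc => ?_⟩
    have : s(g₁, u) ∈ F' := htr u huS (by rwa [Sym2.eq_swap])
    exact hug₁.2 (by rwa [Sym2.eq_swap])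
  obtain ⟨L, hP', hmem'⟩ := pathReplace hP hxy ((hmem g₁).mpr hg₁) hsub' htr' hg₁v hvg₂
    (fun hc => hvS ((hmem v).mp hc)) (fun hc => hg₂S ((hmem g₂).mp hc)) hvg₂ne
  refine ⟨L, hP', fun u => ?_⟩
  rw [hmem' u, Finset.mem_insert, Finset.mem_insert, hmem u]

/-- Expand a 2-DPC w.r.t. the enlarged fault set `F'` into one for `F`. -/
lemma replaceDPC {F F' : Finset (Sym2 V)} {S' : Finset V} {s₁ t₁ s₂ t₂ v g₁ g₂ : V}
    (h : DPCOn F' S' s₁ t₁ s₂ t₂) (h₁ : s₁ ≠ t₁) (h₂ : s₂ ≠ t₂) (hg₁ : g₁ ∈ S')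
    (hsub : F ⊆ F')
    (htr : ∀ u ∈ S', s(g₂, u) ∈ F → s(g₁, u) ∈ F')
    (hvS : v ∉ S') (hg₂S : g₂ ∉ S') (hvg₂ne : v ≠ g₂)
    (hg₁v : Gd F g₁ v) (hvg₂ : Gd F v g₂) :
    DPCOn F (insert v (insert g₂ S')) s₁ t₁ s₂ t₂ := by
  obtain ⟨l₁, l₂, hP₁, hP₂, hdisj, hmem⟩ := h
  have hsub' : ∀ a b : V, Gd F' a b → Gd F a b :=
    fun a b hab => ⟨hab.1, fun hc => hab.2 (hsub hc)⟩
  have htr' : ∀ (l : List V), (∀ w, w ∈ l → w ∈ S') → ∀ u ∈ l, Gd F' u g₁ → Gd F u g₂ := by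
    intro l hl u hu hug₁
    have huS : u ∈ S' := hl u hu
    refine ⟨fun hc => hg₂S (hc ▸ huS), fun hc => ?_⟩
    have : s(g₁, u) ∈ F' := htr u huS (by rwa [Sym2.eq_swap])
    exact hug₁.2 (by rwa [Sym2.eq_swap])
  by_cases hwhere : g₁ ∈ l₁
  · obtain ⟨L, hP', hmem'⟩ := pathReplace hP₁ h₁ hwhere hsub'
      (htr' l₁ (fun w hw => (hmem w).mp (Or.inl hw))) hg₁v hvg₂
      (fun hc => hvS ((hmem v).mp (Or.inl hc))) (fun hc => hg₂S ((hmem g₂).mp (Or.inl hc))) hvg₂ne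
    refine ⟨L, l₂, hP', hP₂.imp hsub', fun u hu => ?_, fun u => ?_⟩
    · rcases (hmem' u).mp hu with h | h | hu'
      · exact fun hc => hvS ((hmem v).mp (Or.inr (h ▸ hc)))
      · exact fun hc => hg₂S ((hmem g₂).mp (Or.inr (h ▸ hc)))
      · exact hdisj u hu'
    · rw [hmem' u, Finset.mem_insert, Finset.mem_insert, ← hmem u]; tauto
  · have hwhere₂ : g₁ ∈ l₂ := by
      rcases (hmem g₁).mpr hg₁ with h | h
      · exact absurd h hwhere
      · exact h
    obtain ⟨L, hP', hmem'⟩ := pathReplace hP₂ h₂ hwhere₂ hsub'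
      (htr' l₂ (fun w hw => (hmem w).mp (Or.inr hw))) hg₁v hvg₂
      (fun hc => hvS ((hmem v).mp (Or.inr hc))) (fun hc => hg₂S ((hmem g₂).mp (Or.inr hc))) hvg₂ne
    refine ⟨l₁, L, hP₁.imp hsub', hP', fun u hu hu2 => ?_, fun u => ?_⟩
    · rcases (hmem' u).mp hu2 with h | h | hu'
      · exact hvS ((hmem v).mp (Or.inl (h ▸ hu)))
      · exact hg₂S ((hmem g₂).mp (Or.inl (h ▸ hu)))
      · exact hdisj u hu hu'
    · rw [hmem' u, Finset.mem_insert, Finset.mem_insert, ← hmem u]; tauto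
/-- `K_S` minus at most `|S| - 4` faulty edges has a Hamiltonian path between
any two prescribed vertices. -/
lemma lemH : ∀ (m : ℕ) (S : Finset V) (F : Finset (Sym2 V)) (x y : V),
    S.card = m → x ∈ S → y ∈ S → x ≠ y → (F ∩ S.sym2).card ≤ m - 4 →
    HamOn F S x y := by
  intro m
  induction m using Nat.strong_induction_on with
  | _ m IH =>
  intro S F x y hcard hx hy hxy hf
  by_cases hC : ∀ a ∈ S, ∀ b ∈ S, a ≠ b → s(a, b) ∈ F → (a = x ∧ b = y) ∨ (a = y ∧ b = x)
  · -- all relevant faults are on the edge {x,y}: direct path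
    have hxyS : ({x, y} : Finset V) ⊆ S := by
      intro u hu; rcases Finset.mem_insert.mp hu with rfl | hu
      · exact hx
      · exact (Finset.mem_singleton.mp hu) ▸ hy
    have hcard2 : ({x, y} : Finset V).card = 2 := Finset.card_pair hxy
    have hcardms : (S \ {x, y}).card = m - 2 := by
      rw [Finset.card_sdiff_of_subset hxyS, hcard2, hcard]
    set ms := (S \ {x, y}).toList with hms
    have hmsmem : ∀ u, u ∈ ms ↔ u ∈ S ∧ u ≠ x ∧ u ≠ y := by
      intro u
      rw [hms, Finset.mem_toList, Finset.mem_sdiff]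
      simp [Finset.mem_insert]
    have hxms : x ∉ ms := fun h => (((hmsmem x).mp h).2.1) rfl
    have hyms : y ∉ ms := fun h => (((hmsmem y).mp h).2.2) rfl
    obtain ⟨hP, hmem⟩ := midsPath (F := F) (Finset.nodup_toList _) hxms hyms hxy
      (fun u hu z hz huz hin => by
        have huS := (hmsmem u).mp hu
        have hzS : z ∈ S := by
          rcases hz with h | rfl | rfl
          · exact ((hmsmem z).mp h).1
          · exact hx
          · exact hy
        rcases hC u huS.1 z hzS huz hin with ⟨h1, _⟩ | ⟨h1, _⟩
        · exact huS.2.1 h1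
        · exact huS.2.2 h1)
      (fun hnil hin => by
        have h1 : s(x, y) ∈ F ∩ S.sym2 :=
          Finset.mem_inter.mpr ⟨hin, Finset.mk_mem_sym2_iff.mpr ⟨hx, hy⟩⟩
        have h2 : 1 ≤ (F ∩ S.sym2).card := Finset.card_pos.mpr ⟨_, h1⟩
        have hemp : S \ {x, y} = ∅ := Finset.toList_eq_nil.mp hnil
        rw [hemp] at hcardms
        simp at hcardms
        omega)
    refine ⟨_, hP, fun u => ?_⟩
    rw [hmem u]
    constructor
    · rintro (rfl | rfl | h)
      · exact hx
      · exact hy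
      · exact ((hmsmem u).mp h).1
    · intro huS
      by_cases h1 : u = x
      · exact Or.inl h1
      by_cases h2 : u = y
      · exact Or.inr (Or.inl h2)
      · exact Or.inr (Or.inr ((hmsmem u).mpr ⟨huS, h1, h2⟩))
  · -- there is a fault with an endpoint off {x, y}
    push_neg at hC
    obtain ⟨a, ha, b, hb, hab, hfab, hnot⟩ := hC
    have hu₀ : ∃ u₀, u₀ ∈ S \ {x, y} ∧ 1 ≤ dgS F S u₀ := by
      by_cases haxy : a ≠ x ∧ a ≠ y
      · refine ⟨a, ?_, dg_pos F S hb hab.symm hfab⟩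
        rw [Finset.mem_sdiff]
        refine ⟨ha, ?_⟩
        simp only [Finset.mem_insert, Finset.mem_singleton]
        push_neg
        exact haxy
      · have hbx : b ≠ x := by
          rintro rfl
          rcases not_and_or.mp haxy with h | h
          · push_neg at h; exact hab h
          · push_neg at h; exact hnot.2 h rfl
        have hby : b ≠ y := by
          rintro rfl
          rcases not_and_or.mp haxy with h | h
          · push_neg at h; exact hnot.1 h rfl
          · push_neg at h; exact hab h
        refine ⟨b, ?_, dg_pos F S ha hab (by rwa [Sym2.eq_swap])⟩
        rw [Finset.mem_sdiff]
        refine ⟨hb, ?_⟩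
        simp only [Finset.mem_insert, Finset.mem_singleton]
        push_neg
        exact ⟨hbx, hby⟩
    obtain ⟨u₀, hu₀mem, hu₀deg⟩ := hu₀
    obtain ⟨v, hvmem, hvmax⟩ := Finset.exists_max_image (S \ {x, y}) (dgS F S) ⟨u₀, hu₀mem⟩
    set d := dgS F S v with hd
    have hd1 : 1 ≤ d := le_trans hu₀deg (hvmax u₀ hu₀mem)
    have hvS : v ∈ S := (Finset.mem_sdiff.mp hvmem).1
    have hvx : v ≠ x := by
      have := (Finset.mem_sdiff.mp hvmem).2; simp [Finset.mem_insert] at this; exact this.1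
    have hvy : v ≠ y := by
      have := (Finset.mem_sdiff.mp hvmem).2; simp [Finset.mem_insert] at this; exact this.2
    have hdrop := fault_drop F S v hvS
    rw [← hd] at hdrop
    have hdlef : d ≤ (F ∩ S.sym2).card := by omega
    have hm5 : 5 ≤ m := by omega
    have hxe : x ∈ S.erase v := Finset.mem_erase.mpr ⟨fun h => hvx h.symm, hx⟩
    have hye : y ∈ S.erase v := Finset.mem_erase.mpr ⟨fun h => hvy h.symm, hy⟩
    have hcard' : (S.erase v).card = m - 1 := by rw [Finset.card_erase_of_mem hvS, hcard]
    by_cases hins : 2 * d + 3 ≤ m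
    · -- remove v and insert it back
      have hf' : (F ∩ (S.erase v).sym2).card ≤ (m - 1) - 4 := by omega
      have hham := IH (m - 1) (by omega) (S.erase v) F x y hcard' hxe hye hxy hf'
      have hins' := insertHam hham (Finset.notMem_erase v S)
        (by rw [hcard']
            have : ((S.erase v).filter (fun u => s(v, u) ∈ F)).card = d := by rw [hd, dgS]
            omega)
      rwa [Finset.insert_erase hvS] at hins'
    · -- v has many faults: merge trick
      set Gv := (S.erase v).filter (fun u => s(v, u) ∉ F) with hGv
      have hGvcard : d + Gv.card = m - 1 := by
        rw [hd, dgS, hGv, ← hcard']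
        exact Finset.card_filter_add_card_filter_not (fun u => s(v, u) ∈ F)
      have hGv3 : 3 ≤ Gv.card := by omega
      have hpair2 : ({x, y} : Finset V).card ≤ 2 := Finset.card_insert_le x {y} |>.trans (by simp)
      have hg₂ex : (Gv \ {x, y}).Nonempty := by
        rw [← Finset.card_pos]
        have := Finset.card_le_card_sdiff_add_card (s := Gv) (t := {x, y})
        omega
      obtain ⟨g₂, hg₂m⟩ := hg₂ex
      have hg₂Gv : g₂ ∈ Gv := (Finset.mem_sdiff.mp hg₂m).1
      have hg₂x : g₂ ≠ x := by
        have := (Finset.mem_sdiff.mp hg₂m).2; simp [Finset.mem_insert] at this; exact this.1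
      have hg₂y : g₂ ≠ y := by
        have := (Finset.mem_sdiff.mp hg₂m).2; simp [Finset.mem_insert] at this; exact this.2
      obtain ⟨hg₂e, hg₂nf⟩ := Finset.mem_filter.mp hg₂Gv
      obtain ⟨hg₂v, hg₂S⟩ := Finset.mem_erase.mp hg₂e
      have hg₁ex : (Gv.erase g₂).Nonempty := by
        rw [← Finset.card_pos, Finset.card_erase_of_mem hg₂Gv]; omega
      obtain ⟨g₁, hg₁m⟩ := hg₁ex
      have hg₁g₂ : g₁ ≠ g₂ := (Finset.mem_erase.mp hg₁m).1
      have hg₁Gv : g₁ ∈ Gv := (Finset.mem_erase.mp hg₁m).2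
      obtain ⟨hg₁e, hg₁nf⟩ := Finset.mem_filter.mp hg₁Gv
      obtain ⟨hg₁v, hg₁S⟩ := Finset.mem_erase.mp hg₁e
      set S' := (S.erase v).erase g₂ with hS'
      have hg₂inerase : g₂ ∈ S.erase v := hg₂e
      have hcS' : S'.card = m - 2 := by
        rw [hS', Finset.card_erase_of_mem hg₂inerase, hcard']
        omega
      set F' := F ∪ (S'.filter (fun w => s(g₂, w) ∈ F)).image (fun w => s(g₁, w)) with hF'
      have hc₂ : dgS F (S.erase v) g₂ = (S'.filter (fun w => s(g₂, w) ∈ F)).card := by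
        rw [dgS, hS']
      have hdrop₂ := fault_drop F (S.erase v) g₂ hg₂inerase
      rw [hc₂] at hdrop₂
      have himg : (F' ∩ S'.sym2).card ≤
          (F ∩ S'.sym2).card + (S'.filter (fun w => s(g₂, w) ∈ F)).card := by
        have hsubset : F' ∩ S'.sym2 ⊆
            (F ∩ S'.sym2) ∪ (S'.filter (fun w => s(g₂, w) ∈ F)).image (fun w => s(g₁, w)) := by
          intro e he
          obtain ⟨heF', heS⟩ := Finset.mem_inter.mp he
          rcases Finset.mem_union.mp heF' with h | h
          · exact Finset.mem_union.mpr (Or.inl (Finset.mem_inter.mpr ⟨h, heS⟩))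
          · exact Finset.mem_union.mpr (Or.inr h)
        calc (F' ∩ S'.sym2).card ≤ _ := Finset.card_le_card hsubset
          _ ≤ (F ∩ S'.sym2).card +
              ((S'.filter (fun w => s(g₂, w) ∈ F)).image (fun w => s(g₁, w))).card :=
            Finset.card_union_le _ _
          _ ≤ _ := by
            have := Finset.card_image_le (s := S'.filter (fun w => s(g₂, w) ∈ F))
              (f := fun w => s(g₁, w))
            omega
      rw [hS'] at hdrop₂ himg
      have hf'' : (F' ∩ ((S.erase v).erase g₂).sym2).card ≤ (m - 2) - 4 := by omega
      have hxS' : x ∈ S' := Finset.mem_erase.mpr ⟨fun h => hg₂x h.symm, hxe⟩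
      have hyS' : y ∈ S' := Finset.mem_erase.mpr ⟨fun h => hg₂y h.symm, hye⟩
      have hham := IH (m - 2) (by omega) S' F' x y hcS' hxS' hyS' hxy (by rw [hS']; exact hf'')
      have hg₁S' : g₁ ∈ S' := Finset.mem_erase.mpr ⟨hg₁g₂, hg₁e⟩
      have hrepl := replaceHam hham hxy hg₁S' Finset.subset_union_left
        (fun u hu hf2 => Finset.mem_union.mpr (Or.inr (Finset.mem_image.mpr
          ⟨u, Finset.mem_filter.mpr ⟨hu, hf2⟩, rfl⟩)))
        (by rw [hS']; exact fun hc => (Finset.mem_erase.mp (Finset.mem_erase.mp hc).2).1 rfl)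
        (Finset.notMem_erase _ _)
        (fun h => hg₂v (h.symm))
        ⟨hg₁v, by rw [Sym2.eq_swap]; exact hg₁nf⟩
        ⟨fun h => hg₂v h.symm, hg₂nf⟩
      rwa [Finset.insert_erase hg₂inerase, Finset.insert_erase hvS] at hrepl

lemma pathL2 {F : Finset (Sym2 V)} {p q : V} (hpq : p ≠ q) (h : s(p, q) ∉ F) :
    PathL F p q [p, q] := by
  refine ⟨?_, ?_, rfl, rfl⟩
  · simp [List.Chain', List.isChain_cons_cons, Gd]
    exact ⟨hpq, h⟩
  · simp [hpq]

lemma pathL3 {F : Finset (Sym2 V)} {p v q : V} (hpv : p ≠ v) (hvq : v ≠ q) (hpq : p ≠ q)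
    (h1 : s(p, v) ∉ F) (h2 : s(v, q) ∉ F) : PathL F p q [p, v, q] := by
  refine ⟨?_, ?_, rfl, rfl⟩
  · simp [List.Chain', List.isChain_cons_cons, Gd]
    exact ⟨⟨hpv, h1⟩, hvq, h2⟩
  · simp [hpv, hvq, hpq]

lemma pathL5 {F : Finset (Sym2 V)} {p a v b q : V}
    (h1 : s(p, a) ∉ F) (h2 : s(a, v) ∉ F) (h3 : s(v, b) ∉ F) (h4 : s(b, q) ∉ F)
    (hpa : p ≠ a) (hpv : p ≠ v) (hpb : p ≠ b) (hpq : p ≠ q)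
    (hav : a ≠ v) (hab : a ≠ b) (haq : a ≠ q) (hvb : v ≠ b) (hvq : v ≠ q) (hbq : b ≠ q) :
    PathL F p q [p, a, v, b, q] := by
  refine ⟨?_, ?_, rfl, rfl⟩
  · simp [List.Chain', List.isChain_cons_cons, Gd]
    exact ⟨⟨hpa, h1⟩, ⟨hav, h2⟩, ⟨hvb, h3⟩, hbq, h4⟩
  · simp [hpa, hpv, hpb, hpq, hav, hab, haq, hvb, hvq, hbq]

lemma assemble3 {F : Finset (Sym2 V)} {S S₃ : Finset V} {p q v p' q' : V}
    (hpS : p ∈ S) (hqS : q ∈ S) (hvS : v ∈ S)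
    (hS₃ : ∀ u, u ∈ S₃ ↔ u ∈ S ∧ u ≠ p ∧ u ≠ v ∧ u ≠ q)
    (hpq : p ≠ q) (hpv : p ≠ v) (hvq : v ≠ q)
    (hGpv : s(p, v) ∉ F) (hGvq : s(v, q) ∉ F)
    (hham : HamOn F S₃ p' q') :
    ∃ L₁ L₂, PathL F p q L₁ ∧ PathL F p' q' L₂ ∧ (∀ u, u ∈ L₁ → u ∉ L₂) ∧
      (∀ u, (u ∈ L₁ ∨ u ∈ L₂) ↔ u ∈ S) := by
  obtain ⟨l, hP, hmem⟩ := hham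
  refine ⟨[p, v, q], l, pathL3 hpv hvq hpq hGpv hGvq, hP, ?_, ?_⟩
  · intro u hu hul
    have := (hS₃ u).mp ((hmem u).mp hul)
    simp only [List.mem_cons, List.not_mem_nil, or_false] at hu
    rcases hu with rfl | rfl | rfl
    · exact this.2.1 rfl
    · exact this.2.2.1 rfl
    · exact this.2.2.2 rfl
  · intro u
    constructor
    · rintro (hu | hu)
      · simp only [List.mem_cons, List.not_mem_nil, or_false] at hu
        rcases hu with rfl | rfl | rfl
        · exact hpS
        · exact hvS
        · exact hqS
      · exact ((hS₃ u).mp ((hmem u).mp hu)).1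
    · intro huS
      by_cases h1 : u = p
      · exact Or.inl (by simp [h1])
      by_cases h2 : u = v
      · exact Or.inl (by simp [h2])
      by_cases h3 : u = q
      · exact Or.inl (by simp [h3])
      · exact Or.inr ((hmem u).mpr ((hS₃ u).mpr ⟨huS, h1, h2, h3⟩))


/-- Assembly for the case where `v` sits between two terminals `p, q`. -/
lemma biiCase {F : Finset (Sym2 V)} {S : Finset V} {v p q p' q' : V}
    (hpS : p ∈ S) (hqS : q ∈ S) (hvS : v ∈ S) (hp'S : p' ∈ S) (hq'S : q' ∈ S)
    (hpq : p ≠ q) (hpv : p ≠ v) (hqv : q ≠ v)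
    (hpp' : p ≠ p') (hpq' : p ≠ q') (hqp' : q ≠ p') (hqq' : q ≠ q')
    (hvp' : v ≠ p') (hvq' : v ≠ q') (hp'q' : p' ≠ q')
    (hfp : s(p, v) ∉ F) (hfq : s(v, q) ∉ F)
    (hfb : (F ∩ (((S.erase p).erase v).erase q).sym2).card ≤
      (((S.erase p).erase v).erase q).card - 4) :
    ∃ L₁ L₂, PathL F p q L₁ ∧ PathL F p' q' L₂ ∧ (∀ u, u ∈ L₁ → u ∉ L₂) ∧
      (∀ u, (u ∈ L₁ ∨ u ∈ L₂) ↔ u ∈ S) := by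
  have hS₃mem : ∀ u, u ∈ ((S.erase p).erase v).erase q ↔ u ∈ S ∧ u ≠ p ∧ u ≠ v ∧ u ≠ q := by
    intro u
    simp only [Finset.mem_erase]
    tauto
  have hham := lemH ((((S.erase p).erase v).erase q).card) (((S.erase p).erase v).erase q)
    F p' q' rfl
    ((hS₃mem p').mpr ⟨hp'S, fun h => hpp' h.symm, fun h => hvp' h.symm, fun h => hqp' h.symm⟩)
    ((hS₃mem q').mpr ⟨hq'S, fun h => hpq' h.symm, fun h => hvq' h.symm, fun h => hqq' h.symm⟩)
    hp'q' hfb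
  exact assemble3 hpS hqS hvS hS₃mem hpq hpv hqv.symm hfp hfq hham

set_option maxHeartbeats 4000000 in
/-- Main lemma: paired 2-DPC of a complete graph on `S` minus few faults. -/
lemma mainAux : ∀ (m : ℕ) (S : Finset V) (F : Finset (Sym2 V)) (s₁ s₂ t₁ t₂ : V),
    S.card = m → s₁ ∈ S → s₂ ∈ S → t₁ ∈ S → t₂ ∈ S →
    s₁ ≠ s₂ → s₁ ≠ t₁ → s₁ ≠ t₂ → s₂ ≠ t₁ → s₂ ≠ t₂ → t₁ ≠ t₂ →
    4 ≤ m → (F ∩ S.sym2).card ≤ m - 4 → (m = 7 → (F ∩ S.sym2).card ≤ 2) →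
    DPCOn F S s₁ t₁ s₂ t₂ := by
  intro m
  induction m using Nat.strong_induction_on with
  | _ m IH =>
  intro S F s₁ s₂ t₁ t₂ hcard hs₁ hs₂ ht₁ ht₂ h12 h11 h1t2 h21 h22 htt h4 hf h7
  set Tset : Finset V := {s₁, s₂, t₁, t₂} with hT
  have hs₁T : s₁ ∈ Tset := by simp [hT]
  have hs₂T : s₂ ∈ Tset := by simp [hT]
  have ht₁T : t₁ ∈ Tset := by simp [hT]
  have ht₂T : t₂ ∈ Tset := by simp [hT]
  have hTmem : ∀ u, u ∈ Tset ↔ u = s₁ ∨ u = s₂ ∨ u = t₁ ∨ u = t₂ := by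
    intro u; simp [hT]
  have hT4 : Tset.card = 4 := by
    rw [hT, Finset.card_insert_of_notMem (by simp [h12, h11, h1t2]),
        Finset.card_insert_of_notMem (by simp [h21, h22]),
        Finset.card_insert_of_notMem (by simp [htt]), Finset.card_singleton]
  have hTsub : Tset ⊆ S := by
    intro u hu
    rcases (hTmem u).mp hu with rfl | rfl | rfl | rfl
    · exact hs₁
    · exact hs₂
    · exact ht₁
    · exact ht₂
  have hNTcard : (S \ Tset).card = m - 4 := by
    rw [Finset.card_sdiff_of_subset hTsub, hT4, hcard]
  by_cases hM0 : ∀ a ∈ S, ∀ b ∈ S, a ≠ b → s(a, b) ∈ F → a ∈ Tset ∧ b ∈ Tset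
  · -- Case M0 : all faults among terminals
    by_cases hm6 : 6 ≤ m
    · -- at least two nonterminals
      have hNT2 : 2 ≤ (S \ Tset).card := by omega
      obtain ⟨w, hw⟩ : (S \ Tset).Nonempty := Finset.card_pos.mp (by omega)
      have hwS : w ∈ S := (Finset.mem_sdiff.mp hw).1
      have hwT : w ∉ Tset := (Finset.mem_sdiff.mp hw).2
      have hws₁ : w ≠ s₁ := fun h => hwT (h ▸ hs₁T)
      have hws₂ : w ≠ s₂ := fun h => hwT (h ▸ hs₂T)
      have hwt₁ : w ≠ t₁ := fun h => hwT (h ▸ ht₁T)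
      have hwt₂ : w ≠ t₂ := fun h => hwT (h ▸ ht₂T)
      set ms := ((S \ Tset).erase w).toList with hms
      have hmsmem : ∀ u, u ∈ ms ↔ u ≠ w ∧ u ∈ S ∧ u ∉ Tset := by
        intro u
        rw [hms, Finset.mem_toList, Finset.mem_erase, Finset.mem_sdiff]
      have hmscard : ((S \ Tset).erase w).card = m - 5 := by
        rw [Finset.card_erase_of_mem hw, hNTcard]; omega
      have hmsne : ms ≠ [] := by
        intro hc
        have : (S \ Tset).erase w = ∅ := Finset.toList_eq_nil.mp hc
        rw [this] at hmscard
        simp at hmscard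
        omega
      obtain ⟨hP₁, hmem₁⟩ := midsPath (F := F) (x := s₁) (y := t₁) (Finset.nodup_toList _)
        (fun h => (((hmsmem s₁).mp h).2.2) hs₁T) (fun h => (((hmsmem t₁).mp h).2.2) ht₁T) h11
        (fun u hu z hz huz hin => by
          have hums := (hmsmem u).mp hu
          have hzS : z ∈ S := by
            rcases hz with h | rfl | rfl
            · exact ((hmsmem z).mp h).2.1
            · exact hs₁
            · exact ht₁
          exact hums.2.2 (hM0 u hums.2.1 z hzS huz hin).1)
        (fun hnil => absurd hnil hmsne)
      obtain ⟨hP₂, hmem₂⟩ := midsPath (F := F) (x := s₂) (y := t₂) (ms := [w])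
        (List.nodup_singleton w)
        (by simp [hws₂.symm]) (by simp [hwt₂.symm]) h22
        (fun u hu z hz huz hin => by
          simp only [List.mem_singleton] at hu
          subst hu
          have hzS : z ∈ S := by
            rcases hz with h | rfl | rfl
            · simp only [List.mem_singleton] at h; subst h; exact hwS
            · exact hs₂
            · exact ht₂
          exact hwT (hM0 u hwS z hzS huz hin).1)
        (fun hnil => by simp at hnil)
      refine ⟨_, _, hP₁, hP₂, ?_, ?_⟩
      · intro u hu hu2
        rw [hmem₁ u] at hu
        rw [hmem₂ u] at hu2
        simp only [List.mem_singleton] at hu2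
        rcases hu with rfl | rfl | h
        · rcases hu2 with h2 | h2 | h2
          · exact h12 h2
          · exact h1t2 h2
          · exact hws₁ h2.symm
        · rcases hu2 with h2 | h2 | h2
          · exact h21 h2.symm
          · exact htt h2
          · exact hwt₁ h2.symm
        · rcases hu2 with h2 | h2 | h2
          · exact ((hmsmem u).mp h).2.2 (h2 ▸ hs₂T)
          · exact ((hmsmem u).mp h).2.2 (h2 ▸ ht₂T)
          · exact ((hmsmem u).mp h).1 h2
      · intro u
        rw [hmem₁ u, hmem₂ u]
        simp only [List.mem_singleton]
        constructor
        · rintro ((rfl | rfl | h) | (rfl | rfl | rfl))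
          · exact hs₁
          · exact ht₁
          · exact ((hmsmem u).mp h).2.1
          · exact hs₂
          · exact ht₂
          · exact hwS
        · intro huS
          by_cases hT1 : u ∈ Tset
          · rcases (hTmem u).mp hT1 with rfl | rfl | rfl | rfl
            · exact Or.inl (Or.inl rfl)
            · exact Or.inr (Or.inl rfl)
            · exact Or.inl (Or.inr (Or.inl rfl))
            · exact Or.inr (Or.inr (Or.inl rfl))
          · by_cases huw : u = w
            · exact Or.inr (Or.inr (Or.inr huw))
            · exact Or.inl (Or.inr (Or.inr ((hmsmem u).mpr ⟨huw, huS, hT1⟩)))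
    · -- m = 4 or m = 5
      have hnofault : ∀ p q : V, p ∈ S → q ∈ S → p ∉ Tset ∨ q ∉ Tset → p ≠ q → s(p, q) ∉ F := by
        intro p q hpS hqS hpq hne hin
        rcases hpq with h | h
        · exact h (hM0 p hpS q hqS hne hin).1
        · exact h (hM0 p hpS q hqS hne hin).2
      by_cases hm5 : m = 5
      · have hNT1 : (S \ Tset).card = 1 := by omega
        obtain ⟨w, hweq⟩ := Finset.card_eq_one.mp hNT1
        have hw : w ∈ S \ Tset := by rw [hweq]; exact Finset.mem_singleton_self w
        have hwS : w ∈ S := (Finset.mem_sdiff.mp hw).1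
        have hwT : w ∉ Tset := (Finset.mem_sdiff.mp hw).2
        have hws₁ : w ≠ s₁ := fun h => hwT (h ▸ hs₁T)
        have hws₂ : w ≠ s₂ := fun h => hwT (h ▸ hs₂T)
        have hwt₁ : w ≠ t₁ := fun h => hwT (h ▸ ht₁T)
        have hwt₂ : w ≠ t₂ := fun h => hwT (h ▸ ht₂T)
        have hScover : ∀ u, u ∈ S ↔ u = s₁ ∨ u = s₂ ∨ u = t₁ ∨ u = t₂ ∨ u = w := by
          intro u
          constructor
          · intro huS
            by_cases hT1 : u ∈ Tset
            · rcases (hTmem u).mp hT1 with rfl | rfl | rfl | rfl <;> tauto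
            · have : u ∈ S \ Tset := Finset.mem_sdiff.mpr ⟨huS, hT1⟩
              rw [hweq] at this
              exact Or.inr (Or.inr (Or.inr (Or.inr (Finset.mem_singleton.mp this))))
          · rintro (rfl | rfl | rfl | rfl | rfl)
            exacts [hs₁, hs₂, ht₁, ht₂, hwS]
        by_cases hst₂ : s(s₂, t₂) ∈ F
        · -- then s(s₁,t₁) ∉ F; paths [s₁,t₁] and [s₂,w,t₂]
          have h2edges : s(s₁, t₁) ∉ F := by
            intro hin
            have he₁ : s(s₁, t₁) ∈ F ∩ S.sym2 :=
              Finset.mem_inter.mpr ⟨hin, Finset.mk_mem_sym2_iff.mpr ⟨hs₁, ht₁⟩⟩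
            have he₂ : s(s₂, t₂) ∈ F ∩ S.sym2 :=
              Finset.mem_inter.mpr ⟨hst₂, Finset.mk_mem_sym2_iff.mpr ⟨hs₂, ht₂⟩⟩
            have hne : s(s₁, t₁) ≠ s(s₂, t₂) := by
              intro h
              rcases Sym2.eq_iff.mp h with ⟨h1, _⟩ | ⟨h1, _⟩
              · exact h12 h1
              · exact h1t2 h1
            have hsub : ({s(s₁, t₁), s(s₂, t₂)} : Finset (Sym2 V)) ⊆ F ∩ S.sym2 := by
              intro e he
              rcases Finset.mem_insert.mp he with rfl | he
              · exact he₁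
              · exact (Finset.mem_singleton.mp he) ▸ he₂
            have := Finset.card_le_card hsub
            rw [Finset.card_pair hne] at this
            omega
          refine ⟨[s₁, t₁], [s₂, w, t₂], pathL2 h11 h2edges,
            pathL3 hws₂.symm hwt₂ h22
              (hnofault s₂ w hs₂ hwS (Or.inr hwT) hws₂.symm)
              (hnofault w t₂ hwS ht₂ (Or.inl hwT) hwt₂), ?_, ?_⟩
          · intro u hu hu2
            simp only [List.mem_cons, List.not_mem_nil, or_false, List.mem_singleton] at hu hu2
            rcases hu with rfl | rfl <;> rcases hu2 with rfl | rfl | rfl <;>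
              first
              | exact h12 rfl
              | exact h1t2 rfl
              | exact h21 rfl
              | exact htt rfl
              | exact hws₁ rfl
              | exact hwt₁ rfl
          · intro u
            rw [hScover u]
            simp only [List.mem_cons, List.not_mem_nil, or_false, List.mem_singleton]
            tauto
        · -- paths [s₁,w,t₁] and [s₂,t₂]
          refine ⟨[s₁, w, t₁], [s₂, t₂],
            pathL3 hws₁.symm hwt₁ h11
              (hnofault s₁ w hs₁ hwS (Or.inr hwT) hws₁.symm)
              (hnofault w t₁ hwS ht₁ (Or.inl hwT) hwt₁),
            pathL2 h22 hst₂, ?_, ?_⟩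
          · intro u hu hu2
            simp only [List.mem_cons, List.not_mem_nil, or_false, List.mem_singleton] at hu hu2
            rcases hu with rfl | rfl | rfl <;> rcases hu2 with rfl | rfl <;>
              first
              | exact h12 rfl
              | exact h1t2 rfl
              | exact h21 rfl
              | exact htt rfl
              | exact hws₂ rfl
              | exact hwt₂ rfl
          · intro u
            rw [hScover u]
            simp only [List.mem_cons, List.not_mem_nil, or_false, List.mem_singleton]
            tauto
      · -- m = 4 : no faults at all inside S
        have hm4 : m = 4 := by omega
        have hf0 : (F ∩ S.sym2).card = 0 := by omega
        have hnof : ∀ p q : V, p ∈ S → q ∈ S → s(p, q) ∉ F := by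
          intro p q hpS hqS hin
          have : s(p, q) ∈ F ∩ S.sym2 :=
            Finset.mem_inter.mpr ⟨hin, Finset.mk_mem_sym2_iff.mpr ⟨hpS, hqS⟩⟩
          have := Finset.card_pos.mpr ⟨_, this⟩
          omega
        have hScover : ∀ u, u ∈ S ↔ u = s₁ ∨ u = s₂ ∨ u = t₁ ∨ u = t₂ := by
          intro u
          constructor
          · intro huS
            by_cases hT1 : u ∈ Tset
            · exact (hTmem u).mp hT1
            · exfalso
              have h1 : u ∈ S \ Tset := Finset.mem_sdiff.mpr ⟨huS, hT1⟩
              have := Finset.card_pos.mpr ⟨u, h1⟩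
              omega
          · rintro (rfl | rfl | rfl | rfl)
            exacts [hs₁, hs₂, ht₁, ht₂]
        refine ⟨[s₁, t₁], [s₂, t₂], pathL2 h11 (hnof s₁ t₁ hs₁ ht₁),
          pathL2 h22 (hnof s₂ t₂ hs₂ ht₂), ?_, ?_⟩
        · intro u hu hu2
          simp only [List.mem_cons, List.not_mem_nil, or_false, List.mem_singleton] at hu hu2
          rcases hu with rfl | rfl <;> rcases hu2 with rfl | rfl <;>
            first
            | exact h12 rfl
            | exact h1t2 rfl
            | exact h21 rfl
            | exact htt rfl
        · intro u
          rw [hScover u]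
          simp only [List.mem_cons, List.not_mem_nil, or_false, List.mem_singleton]
          tauto
  · -- Case M1 : some fault has a nonterminal endpoint
    push_neg at hM0
    obtain ⟨a, ha, b, hb, hab, hfab, hnotT⟩ := hM0
    have hu₀ : ∃ u₀, u₀ ∈ S \ Tset ∧ 1 ≤ dgS F S u₀ := by
      by_cases haT : a ∈ Tset
      · refine ⟨b, Finset.mem_sdiff.mpr ⟨hb, hnotT haT⟩,
          dg_pos F S ha hab (by rwa [Sym2.eq_swap])⟩
      · exact ⟨a, Finset.mem_sdiff.mpr ⟨ha, haT⟩, dg_pos F S hb hab.symm hfab⟩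
    obtain ⟨u₀, hu₀mem, hu₀deg⟩ := hu₀
    obtain ⟨v, hvmem, hvmax⟩ := Finset.exists_max_image (S \ Tset) (dgS F S) ⟨u₀, hu₀mem⟩
    set d := dgS F S v with hd
    have hd1 : 1 ≤ d := le_trans hu₀deg (hvmax u₀ hu₀mem)
    have hvS : v ∈ S := (Finset.mem_sdiff.mp hvmem).1
    have hvT : v ∉ Tset := (Finset.mem_sdiff.mp hvmem).2
    have hvs₁ : v ≠ s₁ := fun h => hvT (h ▸ hs₁T)
    have hvs₂ : v ≠ s₂ := fun h => hvT (h ▸ hs₂T)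
    have hvt₁ : v ≠ t₁ := fun h => hvT (h ▸ ht₁T)
    have hvt₂ : v ≠ t₂ := fun h => hvT (h ▸ ht₂T)
    have hdrop := fault_drop F S v hvS
    rw [← hd] at hdrop
    have hdlef : d ≤ (F ∩ S.sym2).card := by omega
    have hm5 : 5 ≤ m := by omega
    have hcard' : (S.erase v).card = m - 1 := by rw [Finset.card_erase_of_mem hvS, hcard]
    have hs₁e : s₁ ∈ S.erase v := Finset.mem_erase.mpr ⟨hvs₁.symm, hs₁⟩
    have hs₂e : s₂ ∈ S.erase v := Finset.mem_erase.mpr ⟨hvs₂.symm, hs₂⟩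
    have ht₁e : t₁ ∈ S.erase v := Finset.mem_erase.mpr ⟨hvt₁.symm, ht₁⟩
    have ht₂e : t₂ ∈ S.erase v := Finset.mem_erase.mpr ⟨hvt₂.symm, ht₂⟩
    by_cases hins : 2 * d + 4 ≤ m
    · by_cases h8 : m = 8 ∧ 3 ≤ (F ∩ (S.erase v).sym2).card
      · -- M1c : the 8-vertex special configuration
        obtain ⟨hm8, hf'3⟩ := h8
        have hdeq : d = 1 := by omega
        have hfeq : (F ∩ S.sym2).card = 4 := by omega
        by_cases hα : ∃ w ∈ (S \ Tset).erase v,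
            1 ≤ dgS F S w ∧ (F ∩ ((S.erase v).erase w).sym2).card ≤ 2
        · -- double removal
          obtain ⟨w, hwm, hwdeg, hwf⟩ := hα
          obtain ⟨hwv, hwNT⟩ := Finset.mem_erase.mp hwm
          obtain ⟨hwS, hwT⟩ := Finset.mem_sdiff.mp hwNT
          have hws₁ : w ≠ s₁ := fun h => hwT (h ▸ hs₁T)
          have hws₂ : w ≠ s₂ := fun h => hwT (h ▸ hs₂T)
          have hwt₁ : w ≠ t₁ := fun h => hwT (h ▸ ht₁T)
          have hwt₂ : w ≠ t₂ := fun h => hwT (h ▸ ht₂T)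
          have hwe : w ∈ S.erase v := Finset.mem_erase.mpr ⟨hwv, hwS⟩
          have hcS'' : ((S.erase v).erase w).card = m - 2 := by
            rw [Finset.card_erase_of_mem hwe, hcard']; omega
          have hdpc6 := IH (m - 2) (by omega) ((S.erase v).erase w) F s₁ s₂ t₁ t₂ hcS''
            (Finset.mem_erase.mpr ⟨hws₁.symm, hs₁e⟩)
            (Finset.mem_erase.mpr ⟨hws₂.symm, hs₂e⟩)
            (Finset.mem_erase.mpr ⟨hwt₁.symm, ht₁e⟩)
            (Finset.mem_erase.mpr ⟨hwt₂.symm, ht₂e⟩)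
            h12 h11 h1t2 h21 h22 htt (by omega) (by omega) (by omega)
          have hsubw : (((S.erase v).erase w).filter (fun u => s(w, u) ∈ F)).card ≤ 1 := by
            have hsub : ((S.erase v).erase w).filter (fun u => s(w, u) ∈ F) ⊆
                (S.erase w).filter (fun u => s(w, u) ∈ F) := by
              apply Finset.filter_subset_filter
              intro u hu
              simp only [Finset.mem_erase] at hu ⊢
              exact ⟨hu.1, hu.2.2⟩
            have h1 := Finset.card_le_card hsub
            have h2 : ((S.erase w).filter (fun u => s(w, u) ∈ F)).card = dgS F S w := by
              rw [dgS]
            have h3 : dgS F S w ≤ d := hvmax w hwNT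
            omega
          have hins_w := insertDPC hdpc6 (Finset.notMem_erase w _) (by omega)
          rw [Finset.insert_erase hwe] at hins_w
          have hins_v := insertDPC hins_w (Finset.notMem_erase v S)
            (by have h2 : ((S.erase v).filter (fun u => s(v, u) ∈ F)).card = d := by
                  rw [hd, dgS]
                omega)
          rwa [Finset.insert_erase hvS] at hins_v
        · -- rigid configuration: explicit construction
          push_neg at hα
          have hcard1 : ((S.erase v).filter (fun u => s(v, u) ∈ F)).card = 1 := by
            have h2 : ((S.erase v).filter (fun u => s(v, u) ∈ F)).card = d := by rw [hd, dgS]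
            omega
          obtain ⟨z, hzeq⟩ := Finset.card_eq_one.mp hcard1
          have hzmem : z ∈ (S.erase v).filter (fun u => s(v, u) ∈ F) := by
            rw [hzeq]; exact Finset.mem_singleton_self z
          obtain ⟨hze, hzf⟩ := Finset.mem_filter.mp hzmem
          obtain ⟨hzv, hzS⟩ := Finset.mem_erase.mp hze
          have hKey : ∀ a₁ b₁ : V, a₁ ∈ S → b₁ ∈ S → a₁ ≠ b₁ → a₁ ∉ Tset →
              s(a₁, b₁) ∈ F → (a₁ = v ∧ b₁ = z) ∨ (a₁ = z ∧ b₁ = v) := by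
            intro a₁ b₁ ha₁S hb₁S hne ha₁T hfin
            by_cases hav : a₁ = v
            · subst hav
              have : b₁ ∈ (S.erase a₁).filter (fun u => s(a₁, u) ∈ F) :=
                Finset.mem_filter.mpr ⟨Finset.mem_erase.mpr ⟨hne.symm, hb₁S⟩, hfin⟩
              rw [hzeq] at this
              exact Or.inl ⟨rfl, Finset.mem_singleton.mp this⟩
            · have ha₁m : a₁ ∈ (S \ Tset).erase v :=
                Finset.mem_erase.mpr ⟨hav, Finset.mem_sdiff.mpr ⟨ha₁S, ha₁T⟩⟩
              have hdeg1 : 1 ≤ dgS F S a₁ := dg_pos F S hb₁S hne.symm hfin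
              have h3 := hα a₁ ha₁m hdeg1
              have hdrop₂ := fault_drop F (S.erase v) a₁ (Finset.mem_erase.mpr ⟨hav, ha₁S⟩)
              have hdg0 : dgS F (S.erase v) a₁ = 0 := by omega
              have hbv : b₁ = v := by
                by_contra hbv
                have := dg_pos F (S.erase v) (Finset.mem_erase.mpr ⟨hbv, hb₁S⟩) hne.symm hfin
                omega
              subst hbv
              have : a₁ ∈ (S.erase b₁).filter (fun u => s(b₁, u) ∈ F) :=
                Finset.mem_filter.mpr ⟨Finset.mem_erase.mpr ⟨hav, ha₁S⟩,
                  by rw [Sym2.eq_swap]; exact hfin⟩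
              rw [hzeq] at this
              exact Or.inr ⟨Finset.mem_singleton.mp this, rfl⟩
          set others := (S \ Tset).erase v with hoth
          have hothers3 : others.card = 3 := by
            rw [hoth, Finset.card_erase_of_mem hvmem, hNTcard]; omega
          obtain ⟨c, hco, hcz⟩ : ∃ c, c ∈ others ∧ (z ∈ others → c = z) := by
            by_cases hzo : z ∈ others
            · exact ⟨z, hzo, fun _ => rfl⟩
            · obtain ⟨c₀, hc₀⟩ : others.Nonempty := Finset.card_pos.mp (by omega)
              exact ⟨c₀, hc₀, fun h => absurd h hzo⟩
          obtain ⟨a, hao⟩ : (others.erase c).Nonempty := by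
            rw [← Finset.card_pos, Finset.card_erase_of_mem hco]; omega
          obtain ⟨b, hbo⟩ : ((others.erase c).erase a).Nonempty := by
            rw [← Finset.card_pos, Finset.card_erase_of_mem hao,
              Finset.card_erase_of_mem hco]; omega
          have hba : b ≠ a := (Finset.mem_erase.mp hbo).1
          have hbo' : b ∈ others.erase c := (Finset.mem_erase.mp hbo).2
          have hbc : b ≠ c := (Finset.mem_erase.mp hbo').1
          have hbO : b ∈ others := (Finset.mem_erase.mp hbo').2
          have hac : a ≠ c := (Finset.mem_erase.mp hao).1
          have haO : a ∈ others := (Finset.mem_erase.mp hao).2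
          have haz : a ≠ z := by
            intro h
            subst h
            exact hac (hcz haO).symm
          have hbz : b ≠ z := by
            intro h
            subst h
            exact hbc (hcz hbO).symm
          -- unpack memberships
          have hfacts : ∀ u ∈ others, u ≠ v ∧ u ∈ S ∧ u ∉ Tset := by
            intro u hu
            rw [hoth] at hu
            obtain ⟨h1, h2⟩ := Finset.mem_erase.mp hu
            obtain ⟨h3, h4⟩ := Finset.mem_sdiff.mp h2
            exact ⟨h1, h3, h4⟩
          obtain ⟨hav', haS, haT⟩ := hfacts a haO
          obtain ⟨hbv', hbS, hbT⟩ := hfacts b hbO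
          obtain ⟨hcv', hcS, hcT⟩ := hfacts c hco
          have has₁ : a ≠ s₁ := fun h => haT (h ▸ hs₁T)
          have has₂ : a ≠ s₂ := fun h => haT (h ▸ hs₂T)
          have hat₁ : a ≠ t₁ := fun h => haT (h ▸ ht₁T)
          have hat₂ : a ≠ t₂ := fun h => haT (h ▸ ht₂T)
          have hbs₁ : b ≠ s₁ := fun h => hbT (h ▸ hs₁T)
          have hbs₂ : b ≠ s₂ := fun h => hbT (h ▸ hs₂T)
          have hbt₁ : b ≠ t₁ := fun h => hbT (h ▸ ht₁T)
          have hbt₂ : b ≠ t₂ := fun h => hbT (h ▸ ht₂T)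
          have hcs₁ : c ≠ s₁ := fun h => hcT (h ▸ hs₁T)
          have hcs₂ : c ≠ s₂ := fun h => hcT (h ▸ hs₂T)
          have hct₁ : c ≠ t₁ := fun h => hcT (h ▸ ht₁T)
          have hct₂ : c ≠ t₂ := fun h => hcT (h ▸ ht₂T)
          -- the six edges are fault-free
          have hE1 : s(s₁, a) ∉ F := by
            intro hin
            rcases hKey a s₁ haS hs₁ has₁ haT (by rwa [Sym2.eq_swap]) with ⟨h1, _⟩ | ⟨h1, _⟩
            · exact hav' h1
            · exact haz h1
          have hE2 : s(a, v) ∉ F := by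
            intro hin
            rcases hKey a v haS hvS hav' haT hin with ⟨h1, _⟩ | ⟨h1, _⟩
            · exact hav' h1
            · exact haz h1
          have hE3 : s(v, b) ∉ F := by
            intro hin
            rcases hKey b v hbS hvS hbv' hbT (by rwa [Sym2.eq_swap]) with ⟨h1, _⟩ | ⟨h1, _⟩
            · exact hbv' h1
            · exact hbz h1
          have hE4 : s(b, t₁) ∉ F := by
            intro hin
            rcases hKey b t₁ hbS ht₁ hbt₁ hbT hin with ⟨h1, _⟩ | ⟨h1, _⟩
            · exact hbv' h1
            · exact hbz h1
          have hE5 : s(s₂, c) ∉ F := by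
            intro hin
            rcases hKey c s₂ hcS hs₂ hcs₂ hcT (by rwa [Sym2.eq_swap]) with ⟨h1, _⟩ | ⟨_, h2⟩
            · exact hcv' h1
            · exact hvs₂ h2.symm
          have hE6 : s(c, t₂) ∉ F := by
            intro hin
            rcases hKey c t₂ hcS ht₂ hct₂ hcT hin with ⟨h1, _⟩ | ⟨_, h2⟩
            · exact hcv' h1
            · exact hvt₂ h2.symm
          have hP₁ : PathL F s₁ t₁ [s₁, a, v, b, t₁] :=
            pathL5 hE1 hE2 hE3 hE4 has₁.symm hvs₁.symm hbs₁.symm h11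
              hav' hba.symm hat₁ hbv'.symm hvt₁ hbt₁
          have hP₂ : PathL F s₂ t₂ [s₂, c, t₂] :=
            pathL3 hcs₂.symm hct₂ h22 hE5 hE6
          have hcover : others = {a, b, c} := by
            have hsub3 : ({a, b, c} : Finset V) ⊆ others := by
              intro u hu
              rcases Finset.mem_insert.mp hu with rfl | hu
              · exact haO
              · rcases Finset.mem_insert.mp hu with rfl | hu
                · exact hbO
                · exact (Finset.mem_singleton.mp hu) ▸ hco
            have hc3 : ({a, b, c} : Finset V).card = 3 := by
              rw [Finset.card_insert_of_notMem (by simp [hba.symm, hac]),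
                Finset.card_insert_of_notMem (by simp [hbc]), Finset.card_singleton]
            exact (Finset.eq_of_subset_of_card_le hsub3 (by omega)).symm
          refine ⟨[s₁, a, v, b, t₁], [s₂, c, t₂], hP₁, hP₂, ?_, ?_⟩
          · intro u hu hu2
            simp only [List.mem_cons, List.not_mem_nil, or_false] at hu hu2
            rcases hu with rfl | rfl | rfl | rfl | rfl <;>
              rcases hu2 with h2 | h2 | h2 <;>
              first
              | exact h12 h2
              | exact h1t2 h2
              | exact h21 h2.symm
              | exact htt h2
              | exact hcs₁ h2.symm
              | exact hct₁ h2.symm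
              | exact has₂ h2
              | exact hat₂ h2
              | exact hbs₂ h2
              | exact hbt₂ h2
              | exact hvs₂ h2
              | exact hvt₂ h2
              | exact hac h2
              | exact hbc h2
              | exact hcv' h2.symm
          · intro u
            simp only [List.mem_cons, List.not_mem_nil, or_false]
            constructor
            · rintro ((rfl | rfl | rfl | rfl | rfl) | (rfl | rfl | rfl))
              exacts [hs₁, haS, hvS, hbS, ht₁, hs₂, hcS, ht₂]
            · intro huS
              by_cases hT1 : u ∈ Tset
              · rcases (hTmem u).mp hT1 with rfl | rfl | rfl | rfl
                · exact Or.inl (Or.inl rfl)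
                · exact Or.inr (Or.inl rfl)
                · exact Or.inl (Or.inr (Or.inr (Or.inr (Or.inr rfl))))
                · exact Or.inr (Or.inr (Or.inr rfl))
              · by_cases huv : u = v
                · exact Or.inl (Or.inr (Or.inr (Or.inl huv)))
                · have : u ∈ others := by
                    rw [hoth]
                    exact Finset.mem_erase.mpr ⟨huv, Finset.mem_sdiff.mpr ⟨huS, hT1⟩⟩
                  rw [hcover] at this
                  rcases Finset.mem_insert.mp this with rfl | h'
                  · exact Or.inl (Or.inr (Or.inl rfl))
                  · rcases Finset.mem_insert.mp h' with rfl | h'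
                    · exact Or.inl (Or.inr (Or.inr (Or.inr (Or.inl rfl))))
                    · exact Or.inr (Or.inr (Or.inl (Finset.mem_singleton.mp h')))
      · -- M1a : remove v and insert it back
        have hf' : (F ∩ (S.erase v).sym2).card ≤ (m - 1) - 4 := by omega
        have h7' : m - 1 = 7 → (F ∩ (S.erase v).sym2).card ≤ 2 := by
          intro hm8
          rcases not_and_or.mp h8 with h | h
          · omega
          · omega
        have hdpc := IH (m - 1) (by omega) (S.erase v) F s₁ s₂ t₁ t₂ hcard'
          hs₁e hs₂e ht₁e ht₂e h12 h11 h1t2 h21 h22 htt (by omega) hf' h7'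
        have hres := insertDPC hdpc (Finset.notMem_erase v S)
          (by rw [hcard']
              have : ((S.erase v).filter (fun u => s(v, u) ∈ F)).card = d := by rw [hd, dgS]
              omega)
        rwa [Finset.insert_erase hvS] at hres
    · -- M1b : v has many faults
      set Gv := (S.erase v).filter (fun u => s(v, u) ∉ F) with hGv
      have hGvcard : d + Gv.card = m - 1 := by
        rw [hd, dgS, hGv, ← hcard']
        exact Finset.card_filter_add_card_filter_not (fun u => s(v, u) ∈ F)
      have hGv3 : 3 ≤ Gv.card := by omega
      by_cases hbi : ∃ g₂ ∈ (S \ Tset).erase v, s(v, g₂) ∉ F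
      · -- M1b-i : merge trick with nonterminal good neighbour
        obtain ⟨g₂, hg₂m, hg₂nf⟩ := hbi
        obtain ⟨hg₂v, hg₂NT⟩ := Finset.mem_erase.mp hg₂m
        obtain ⟨hg₂S, hg₂T⟩ := Finset.mem_sdiff.mp hg₂NT
        have hg₂Gv : g₂ ∈ Gv :=
          Finset.mem_filter.mpr ⟨Finset.mem_erase.mpr ⟨hg₂v, hg₂S⟩, hg₂nf⟩
        have hg₁ex : (Gv.erase g₂).Nonempty := by
          rw [← Finset.card_pos, Finset.card_erase_of_mem hg₂Gv]; omega
        obtain ⟨g₁, hg₁m⟩ := hg₁ex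
        have hg₁g₂ : g₁ ≠ g₂ := (Finset.mem_erase.mp hg₁m).1
        have hg₁Gv : g₁ ∈ Gv := (Finset.mem_erase.mp hg₁m).2
        obtain ⟨hg₁e, hg₁nf⟩ := Finset.mem_filter.mp hg₁Gv
        obtain ⟨hg₁v, hg₁S⟩ := Finset.mem_erase.mp hg₁e
        have hm6 : 6 ≤ m := by
          have hp2 : ({v, g₂} : Finset V).card = 2 := Finset.card_pair (fun h => hg₂v h.symm)
          have hsub2 : ({v, g₂} : Finset V) ⊆ S \ Tset := by
            intro u hu
            rcases Finset.mem_insert.mp hu with rfl | hu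
            · exact hvmem
            · exact (Finset.mem_singleton.mp hu) ▸ hg₂NT
          have := Finset.card_le_card hsub2
          omega
        set S' := (S.erase v).erase g₂ with hS'
        have hg₂inerase : g₂ ∈ S.erase v := Finset.mem_erase.mpr ⟨hg₂v, hg₂S⟩
        have hcS' : S'.card = m - 2 := by
          rw [hS', Finset.card_erase_of_mem hg₂inerase, hcard']; omega
        set F' := F ∪ (S'.filter (fun w => s(g₂, w) ∈ F)).image (fun w => s(g₁, w)) with hF'
        have hc₂ : dgS F (S.erase v) g₂ = (S'.filter (fun w => s(g₂, w) ∈ F)).card := by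
          rw [dgS, hS']
        have hdrop₂ := fault_drop F (S.erase v) g₂ hg₂inerase
        rw [hc₂] at hdrop₂
        have himg : (F' ∩ S'.sym2).card ≤
            (F ∩ S'.sym2).card + (S'.filter (fun w => s(g₂, w) ∈ F)).card := by
          have hsubset : F' ∩ S'.sym2 ⊆
              (F ∩ S'.sym2) ∪ (S'.filter (fun w => s(g₂, w) ∈ F)).image (fun w => s(g₁, w)) := by
            intro e he
            obtain ⟨heF', heS⟩ := Finset.mem_inter.mp he
            rcases Finset.mem_union.mp heF' with h | h
            · exact Finset.mem_union.mpr (Or.inl (Finset.mem_inter.mpr ⟨h, heS⟩))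
            · exact Finset.mem_union.mpr (Or.inr h)
          calc (F' ∩ S'.sym2).card ≤ _ := Finset.card_le_card hsubset
            _ ≤ (F ∩ S'.sym2).card +
                ((S'.filter (fun w => s(g₂, w) ∈ F)).image (fun w => s(g₁, w))).card :=
              Finset.card_union_le _ _
            _ ≤ _ := by
              have := Finset.card_image_le (s := S'.filter (fun w => s(g₂, w) ∈ F))
                (f := fun w => s(g₁, w))
              omega
        rw [hS'] at hdrop₂ himg
        have hf'' : (F' ∩ ((S.erase v).erase g₂).sym2).card ≤ (m - 2) - 4 := by omega
        have h7'' : m - 2 = 7 → (F' ∩ ((S.erase v).erase g₂).sym2).card ≤ 2 := by omega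
        have hg₂s₁ : g₂ ≠ s₁ := fun h => hg₂T (h ▸ hs₁T)
        have hg₂s₂ : g₂ ≠ s₂ := fun h => hg₂T (h ▸ hs₂T)
        have hg₂t₁ : g₂ ≠ t₁ := fun h => hg₂T (h ▸ ht₁T)
        have hg₂t₂ : g₂ ≠ t₂ := fun h => hg₂T (h ▸ ht₂T)
        have hdpc := IH (m - 2) (by omega) S' F' s₁ s₂ t₁ t₂ hcS'
          (Finset.mem_erase.mpr ⟨hg₂s₁.symm, hs₁e⟩)
          (Finset.mem_erase.mpr ⟨hg₂s₂.symm, hs₂e⟩)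
          (Finset.mem_erase.mpr ⟨hg₂t₁.symm, ht₁e⟩)
          (Finset.mem_erase.mpr ⟨hg₂t₂.symm, ht₂e⟩)
          h12 h11 h1t2 h21 h22 htt (by omega) (by rw [hS']; exact hf'')
          (by rw [hS']; exact h7'')
        have hg₁S' : g₁ ∈ S' := Finset.mem_erase.mpr ⟨hg₁g₂, hg₁e⟩
        have hres := replaceDPC hdpc h11 h22 hg₁S' Finset.subset_union_left
          (fun u hu hf2 => Finset.mem_union.mpr (Or.inr (Finset.mem_image.mpr
            ⟨u, Finset.mem_filter.mpr ⟨hu, hf2⟩, rfl⟩)))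
          (by rw [hS']; exact fun hc => (Finset.mem_erase.mp (Finset.mem_erase.mp hc).2).1 rfl)
          (Finset.notMem_erase _ _)
          (fun h => hg₂v h.symm)
          ⟨hg₁v, by rw [Sym2.eq_swap]; exact hg₁nf⟩
          ⟨fun h => hg₂v h.symm, hg₂nf⟩
        rwa [Finset.insert_erase hg₂inerase, Finset.insert_erase hvS] at hres
      · -- M1b-ii : all nonterminal neighbours of v are faulty
        push_neg at hbi
        have hGvT : Gv ⊆ Tset := by
          intro u hu
          obtain ⟨hue, hunf⟩ := Finset.mem_filter.mp hu
          obtain ⟨huv, huS⟩ := Finset.mem_erase.mp hue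
          by_contra huT
          exact hunf (hbi u (Finset.mem_erase.mpr ⟨huv, Finset.mem_sdiff.mpr ⟨huS, huT⟩⟩))
        have hdm5 : m - 5 ≤ d := by
          have hsub5 : (S \ Tset).erase v ⊆ (S.erase v).filter (fun u => s(v, u) ∈ F) := by
            intro u hu
            obtain ⟨huv, huNT⟩ := Finset.mem_erase.mp hu
            exact Finset.mem_filter.mpr
              ⟨Finset.mem_erase.mpr ⟨huv, (Finset.mem_sdiff.mp huNT).1⟩, hbi u hu⟩
          have h5c : ((S \ Tset).erase v).card = m - 5 := by
            rw [Finset.card_erase_of_mem hvmem, hNTcard]; omega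
          have := Finset.card_le_card hsub5
          rw [h5c, ← dgS, ← hd] at this
          exact this
        -- at most one terminal is missing from Gv
        have hsub2 : ∀ w₀ ∈ Tset, ∀ u₁ ∈ Tset, w₀ ≠ u₁ → w₀ ∉ Gv → u₁ ∉ Gv → False := by
          intro w₀ hw₀ u₁ hu₁ hne hw₀G hu₁G
          have hGsub : Gv ⊆ Tset \ {w₀, u₁} := by
            intro u hu
            refine Finset.mem_sdiff.mpr ⟨hGvT hu, ?_⟩
            simp only [Finset.mem_insert, Finset.mem_singleton]
            rintro (rfl | rfl)
            · exact hw₀G hu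
            · exact hu₁G hu
          have hps : ({w₀, u₁} : Finset V) ⊆ Tset := by
            intro u hu
            rcases Finset.mem_insert.mp hu with rfl | hu
            · exact hw₀
            · exact (Finset.mem_singleton.mp hu) ▸ hu₁
          have hcardsd : (Tset \ {w₀, u₁}).card = 2 := by
            rw [Finset.card_sdiff_of_subset hps, hT4, Finset.card_pair hne]
          have := Finset.card_le_card hGsub
          omega
        have hpick : (s₁ ∈ Gv ∧ t₁ ∈ Gv) ∨ (s₂ ∈ Gv ∧ t₂ ∈ Gv) := by
          by_cases hp1 : s₁ ∈ Gv ∧ t₁ ∈ Gv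
          · exact Or.inl hp1
          · right
            rcases not_and_or.mp hp1 with h | h
            · constructor
              · by_contra hc; exact hsub2 s₁ hs₁T s₂ hs₂T h12 h hc
              · by_contra hc; exact hsub2 s₁ hs₁T t₂ ht₂T h1t2 h hc
            · constructor
              · by_contra hc; exact hsub2 t₁ ht₁T s₂ hs₂T (fun hh => h21 hh.symm) h hc
              · by_contra hc; exact hsub2 t₁ ht₁T t₂ ht₂T htt h hc
        have hcommon : ∀ p q p' q' : V, p ∈ Gv → q ∈ Gv →
            p ≠ q → p ≠ p' → p ≠ q' → q ≠ p' → q ≠ q' → p' ≠ q' →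
            v ≠ p' → v ≠ q' → p' ∈ S → q' ∈ S →
            ∃ L₁ L₂, PathL F p q L₁ ∧ PathL F p' q' L₂ ∧ (∀ u, u ∈ L₁ → u ∉ L₂) ∧
              (∀ u, (u ∈ L₁ ∨ u ∈ L₂) ↔ u ∈ S) := by
          intro p q p' q' hpGv hqGv hpq hpp' hpq' hqp' hqq' hp'q' hvp' hvq' hp'S hq'S
          obtain ⟨hpe, hpnf⟩ := Finset.mem_filter.mp hpGv
          obtain ⟨hpv, hpS⟩ := Finset.mem_erase.mp hpe
          obtain ⟨hqe, hqnf⟩ := Finset.mem_filter.mp hqGv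
          obtain ⟨hqv, hqS⟩ := Finset.mem_erase.mp hqe
          have hvep : v ∈ S.erase p := Finset.mem_erase.mpr ⟨fun h => hpv h.symm, hvS⟩
          have hqevp : q ∈ (S.erase p).erase v :=
            Finset.mem_erase.mpr ⟨hqv, Finset.mem_erase.mpr ⟨fun h => hpq h.symm, hqS⟩⟩
          have hcS₃ : (((S.erase p).erase v).erase q).card = m - 3 := by
            rw [Finset.card_erase_of_mem hqevp, Finset.card_erase_of_mem hvep,
              Finset.card_erase_of_mem hpS, hcard]
            omega
          have hS₃sub : ((S.erase p).erase v).erase q ⊆ S.erase v := by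
            intro u hu
            simp only [Finset.mem_erase] at hu ⊢
            tauto
          have hf₃ : (F ∩ (((S.erase p).erase v).erase q).sym2).card ≤
              (((S.erase p).erase v).erase q).card - 4 := by
            have hmono : F ∩ (((S.erase p).erase v).erase q).sym2 ⊆ F ∩ (S.erase v).sym2 :=
              Finset.inter_subset_inter (le_refl F) (Finset.sym2_mono hS₃sub)
            have hc3 := Finset.card_le_card hmono
            rw [hcS₃]
            omega
          exact biiCase hpS hqS hvS hp'S hq'S hpq hpv hqv hpp' hpq'
            hqp' hqq' hvp' hvq' hp'q' (by rw [Sym2.eq_swap]; exact hpnf) hqnf hf₃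
        rcases hpick with ⟨hpG, hqG⟩ | ⟨hpG, hqG⟩
        · obtain ⟨L₁, L₂, hP₁, hP₂, hdisj, hcov⟩ := hcommon s₁ t₁ s₂ t₂ hpG hqG
            h11 h12 h1t2 (fun h => h21 h.symm) htt h22 hvs₂ hvt₂ hs₂ ht₂
          exact ⟨L₁, L₂, hP₁, hP₂, hdisj, hcov⟩
        · obtain ⟨L₁, L₂, hP₁, hP₂, hdisj, hcov⟩ := hcommon s₂ t₂ s₁ t₁ hpG hqG
            h22 (fun h => h12 h.symm) h21 (fun h => h1t2 h.symm)
            (fun h => htt h.symm) h11 hvs₁ hvt₁ hs₁ ht₁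
          exact ⟨L₂, L₁, hP₂, hP₁, fun u hu hu2 => hdisj u hu2 hu, fun u => by
            rw [← hcov u]; tauto⟩

lemma exists_walk {W : Type*} (G : SimpleGraph W) :
    ∀ (l : List W) (x y : W), l.Chain' G.Adj → l.head? = some x → l.getLast? = some y →
    ∃ w : G.Walk x y, w.support = l := by
  intro l
  induction l with
  | nil => intro x y _ hh _; simp at hh
  | cons a t IHt =>
    intro x y hc hh hl
    have hax : a = x := by simpa using hh
    subst hax
    cases t with
    | nil =>
      have hay : a = y := by simpa using hl
      subst hay
      exact ⟨SimpleGraph.Walk.nil, by simp⟩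
    | cons b t' =>
      unfold List.Chain' at hc
      rw [List.isChain_cons_cons] at hc
      rw [List.getLast?_cons_cons] at hl
      obtain ⟨w', hw'⟩ := IHt b y hc.2 rfl hl
      exact ⟨SimpleGraph.Walk.cons hc.1 w', by simp [hw']⟩

theorem stmt1' (n : ℕ) (hn : 4 ≤ n) (hn7 : n ≠ 7) (F : Finset (Sym2 (Fin n)))
    (hF : F.card ≤ n - 4) (s₁ s₂ t₁ t₂ : Fin n) (hd : [s₁, s₂, t₁, t₂].Nodup) :
    ∃ (p : ((⊤ : SimpleGraph (Fin n)).deleteEdges ↑F).Walk s₁ t₁)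
      (q : ((⊤ : SimpleGraph (Fin n)).deleteEdges ↑F).Walk s₂ t₂), p.IsPath ∧ q.IsPath ∧
    (∀ v, v ∈ p.support → v ∉ q.support) ∧ (∀ v, v ∈ p.support ∨ v ∈ q.support) := by
  simp only [List.nodup_cons, List.mem_cons, List.not_mem_nil, or_false, List.mem_singleton,
    List.nodup_nil, and_true, not_or] at hd
  obtain ⟨⟨h12, h11, h1t2⟩, ⟨h21, h22⟩, htt, -⟩ := hd
  have hcardu : (Finset.univ : Finset (Fin n)).card = n := by simp
  have hfin : (F ∩ (Finset.univ : Finset (Fin n)).sym2).card ≤ n - 4 := by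
    refine le_trans (Finset.card_le_card (Finset.inter_subset_left)) hF
  obtain ⟨l₁, l₂, hP₁, hP₂, hdisj, hcov⟩ := mainAux n Finset.univ F s₁ s₂ t₁ t₂ hcardu
    (Finset.mem_univ _) (Finset.mem_univ _) (Finset.mem_univ _) (Finset.mem_univ _)
    h12 h11 h1t2 h21 h22 htt hn hfin (fun h => absurd h hn7)
  set G := (⊤ : SimpleGraph (Fin n)).deleteEdges ↑F with hG
  have hadj : ∀ a b : Fin n, Gd F a b → G.Adj a b := by
    intro a b hab
    rw [hG, SimpleGraph.deleteEdges_adj]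
    exact ⟨hab.1, by simpa using hab.2⟩
  obtain ⟨p, hp⟩ := exists_walk G l₁ s₁ t₁ (hP₁.1.imp (fun {a b} h => hadj a b h))
    hP₁.2.2.1 hP₁.2.2.2
  obtain ⟨q, hq⟩ := exists_walk G l₂ s₂ t₂ (hP₂.1.imp (fun {a b} h => hadj a b h))
    hP₂.2.2.1 hP₂.2.2.2
  refine ⟨p, q, SimpleGraph.Walk.IsPath.mk' (by rw [hp]; exact hP₁.2.1),
    SimpleGraph.Walk.IsPath.mk' (by rw [hq]; exact hP₂.2.1), ?_, ?_⟩
  · intro u hu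
    rw [hp] at hu
    rw [hq]
    exact hdisj u hu
  · intro u
    rw [hp, hq]
    exact (hcov u).mpr (Finset.mem_univ u)

end DPCAux

/-- For `n ≥ 4`, `n ≠ 7`, `K_n` minus at most `n - 4` edges is paired 2-disjoint path coverable. -/
theorem stmt1 (n : ℕ) (hn : 4 ≤ n) (hn7 : n ≠ 7) (F : Finset (Sym2 (Fin n)))
    (hF : F.card ≤ n - 4) (s₁ s₂ t₁ t₂ : Fin n) (hd : [s₁, s₂, t₁, t₂].Nodup) :
    HasPaired2DPC ((⊤ : SimpleGraph (Fin n)).deleteEdges ↑F) s₁ t₁ s₂ t₂ := by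
  exact stmt1' n hn hn7 F hF s₁ s₂ t₁ t₂ hd
end

section
/- For n = 7, for any edge set F of K_7 with |F| ≤ 2 and any four distinct vertices s₁, s₂, t₁, t₂, the graph K_7 − F contains two vertex-disjoint paths from s₁ to t₁ and from s₂ to t₂ that together cover all 7 vertices. -/
open SimpleGraph

lemma hasPaired2DPC_map {V W : Type*} {G : SimpleGraph V} {H : SimpleGraph W}
    (f : V ≃ W) (hadj : ∀ u v, G.Adj u v → H.Adj (f u) (f v)) {s₁ t₁ s₂ t₂ : V}
    (h : HasPaired2DPC G s₁ t₁ s₂ t₂) :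
    HasPaired2DPC H (f s₁) (f t₁) (f s₂) (f t₂) := by
  obtain ⟨p, q, hp, hq, hdisj, hcov⟩ := h
  let φ : G →g H := ⟨f, fun {u v} h => hadj u v h⟩
  refine ⟨p.map φ, q.map φ, SimpleGraph.Walk.map_isPath_of_injective f.injective hp,
    SimpleGraph.Walk.map_isPath_of_injective f.injective hq, ?_, ?_⟩
  · intro v hv hv'
    rw [SimpleGraph.Walk.support_map, List.mem_map] at hv hv'
    obtain ⟨u, hu, rfl⟩ := hv
    obtain ⟨u', hu', hfu⟩ := hv'
    have : u' = u := f.injective hfu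
    subst this
    exact hdisj u' hu hu'
  · intro v
    rcases hcov (f.symm v) with h | h
    · left
      rw [SimpleGraph.Walk.support_map, List.mem_map]
      exact ⟨f.symm v, h, f.apply_symm_apply v⟩
    · right
      rw [SimpleGraph.Walk.support_map, List.mem_map]
      exact ⟨f.symm v, h, f.apply_symm_apply v⟩

lemma core (F : Finset (Sym2 (Fin 7))) (hF : F.card ≤ 2) :
    HasPaired2DPC ((⊤ : SimpleGraph (Fin 7)).deleteEdges ↑F) 0 2 1 3 := by
  set G := (⊤ : SimpleGraph (Fin 7)).deleteEdges ↑F with hG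
  have key : (∀ x ∈ ([s(0,4), s(4,2), s(1,5), s(5,6), s(6,3)] : List (Sym2 (Fin 7))), x ∉ F) ∨ (∀ x ∈ ([s(0,5), s(5,2), s(1,6), s(6,4), s(4,3)] : List (Sym2 (Fin 7))), x ∉ F) ∨ (∀ x ∈ ([s(0,6), s(6,2), s(1,4), s(4,5), s(5,3)] : List (Sym2 (Fin 7))), x ∉ F) := by
    by_contra hcon
    push_neg at hcon
    obtain ⟨⟨x1, hx1, hx1F⟩, ⟨x2, hx2, hx2F⟩, ⟨x3, hx3, hx3F⟩⟩ := hcon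
    have d12 : x1 ≠ x2 := by fin_cases hx1 <;> fin_cases hx2 <;> decide
    have d13 : x1 ≠ x3 := by fin_cases hx1 <;> fin_cases hx3 <;> decide
    have d23 : x2 ≠ x3 := by fin_cases hx2 <;> fin_cases hx3 <;> decide
    have hsub : ({x1, x2, x3} : Finset (Sym2 (Fin 7))) ⊆ F := by
      intro x hx
      simp only [Finset.mem_insert, Finset.mem_singleton] at hx
      rcases hx with rfl | rfl | rfl <;> assumption
    have hcard : ({x1, x2, x3} : Finset (Sym2 (Fin 7))).card = 3 := by
      rw [Finset.card_insert_of_notMem (by simp [d12, d13]),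
        Finset.card_insert_of_notMem (by simp [d23]), Finset.card_singleton]
    have := Finset.card_le_card hsub
    omega
  have hadj : ∀ (L : List (Sym2 (Fin 7))), (∀ x ∈ L, x ∉ F) →
      ∀ u v : Fin 7, u ≠ v → s(u,v) ∈ L → G.Adj u v := by
    intro L hL u v hne hm
    rw [hG, SimpleGraph.deleteEdges_adj]
    exact ⟨hne, by simpa using hL _ hm⟩
  rcases key with h | h | h
  · let p : G.Walk 0 2 := .cons (hadj [s(0,4), s(4,2), s(1,5), s(5,6), s(6,3)] h 0 4 (by decide) (by decide))
      (.cons (hadj [s(0,4), s(4,2), s(1,5), s(5,6), s(6,3)] h 4 2 (by decide) (by decide)) .nil)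
    let q : G.Walk 1 3 := .cons (hadj [s(0,4), s(4,2), s(1,5), s(5,6), s(6,3)] h 1 5 (by decide) (by decide))
      (.cons (hadj [s(0,4), s(4,2), s(1,5), s(5,6), s(6,3)] h 5 6 (by decide) (by decide))
      (.cons (hadj [s(0,4), s(4,2), s(1,5), s(5,6), s(6,3)] h 6 3 (by decide) (by decide)) .nil))
    have hps : p.support = [0, 4, 2] := rfl
    have hqs : q.support = [1, 5, 6, 3] := rfl
    exact ⟨p, q, by rw [SimpleGraph.Walk.isPath_def, hps]; decide,
      by rw [SimpleGraph.Walk.isPath_def, hqs]; decide,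
      by rw [hps, hqs]; decide, by rw [hps, hqs]; decide⟩
  · let p : G.Walk 0 2 := .cons (hadj [s(0,5), s(5,2), s(1,6), s(6,4), s(4,3)] h 0 5 (by decide) (by decide))
      (.cons (hadj [s(0,5), s(5,2), s(1,6), s(6,4), s(4,3)] h 5 2 (by decide) (by decide)) .nil)
    let q : G.Walk 1 3 := .cons (hadj [s(0,5), s(5,2), s(1,6), s(6,4), s(4,3)] h 1 6 (by decide) (by decide))
      (.cons (hadj [s(0,5), s(5,2), s(1,6), s(6,4), s(4,3)] h 6 4 (by decide) (by decide))
      (.cons (hadj [s(0,5), s(5,2), s(1,6), s(6,4), s(4,3)] h 4 3 (by decide) (by decide)) .nil))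
    have hps : p.support = [0, 5, 2] := rfl
    have hqs : q.support = [1, 6, 4, 3] := rfl
    exact ⟨p, q, by rw [SimpleGraph.Walk.isPath_def, hps]; decide,
      by rw [SimpleGraph.Walk.isPath_def, hqs]; decide,
      by rw [hps, hqs]; decide, by rw [hps, hqs]; decide⟩
  · let p : G.Walk 0 2 := .cons (hadj [s(0,6), s(6,2), s(1,4), s(4,5), s(5,3)] h 0 6 (by decide) (by decide))
      (.cons (hadj [s(0,6), s(6,2), s(1,4), s(4,5), s(5,3)] h 6 2 (by decide) (by decide)) .nil)
    let q : G.Walk 1 3 := .cons (hadj [s(0,6), s(6,2), s(1,4), s(4,5), s(5,3)] h 1 4 (by decide) (by decide))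
      (.cons (hadj [s(0,6), s(6,2), s(1,4), s(4,5), s(5,3)] h 4 5 (by decide) (by decide))
      (.cons (hadj [s(0,6), s(6,2), s(1,4), s(4,5), s(5,3)] h 5 3 (by decide) (by decide)) .nil))
    have hps : p.support = [0, 6, 2] := rfl
    have hqs : q.support = [1, 4, 5, 3] := rfl
    exact ⟨p, q, by rw [SimpleGraph.Walk.isPath_def, hps]; decide,
      by rw [SimpleGraph.Walk.isPath_def, hqs]; decide,
      by rw [hps, hqs]; decide, by rw [hps, hqs]; decide⟩

/-- `K_7` minus at most `2` edges is paired 2-disjoint path coverable. -/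
theorem stmt2 (F : Finset (Sym2 (Fin 7))) (hF : F.card ≤ 2)
    (s₁ s₂ t₁ t₂ : Fin 7) (hd : [s₁, s₂, t₁, t₂].Nodup) :
    HasPaired2DPC ((⊤ : SimpleGraph (Fin 7)).deleteEdges ↑F) s₁ t₁ s₂ t₂ := by
  classical
  set T : Finset (Fin 7) := {s₁, s₂, t₁, t₂} with hT
  set l : List (Fin 7) := [s₁, s₂, t₁, t₂] ++ (Finset.univ \ T).sort (· ≤ ·) with hl
  have hmemT : ∀ x, x ∈ ([s₁, s₂, t₁, t₂] : List (Fin 7)) ↔ x ∈ T := by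
    intro x; simp [hT]
  have hnd : l.Nodup := by
    rw [hl]
    refine List.Nodup.append hd (Finset.sort_nodup _ _) ?_
    intro x hx1 hx2
    rw [Finset.mem_sort, Finset.mem_sdiff] at hx2
    exact hx2.2 ((hmemT x).1 hx1)
  have hmem : ∀ x, x ∈ l := by
    intro x
    rw [hl, List.mem_append]
    by_cases hx : x ∈ T
    · exact Or.inl ((hmemT x).2 hx)
    · exact Or.inr (by rw [Finset.mem_sort, Finset.mem_sdiff]; exact ⟨Finset.mem_univ x, hx⟩)
  have hTcard : T.card = 4 := by
    have : T = ([s₁, s₂, t₁, t₂] : List (Fin 7)).toFinset := by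
      ext x; rw [List.mem_toFinset]; exact ((hmemT x)).symm
    rw [this, List.toFinset_card_of_nodup hd]
    rfl
  have hlen : l.length = 7 := by
    rw [hl, List.length_append, Finset.length_sort,
      Finset.card_sdiff_of_subset (Finset.subset_univ T), hTcard]
    simp
  let e : Fin l.length ≃ Fin 7 := List.Nodup.getEquivOfForallMemList l hnd hmem
  let σ : Fin 7 ≃ Fin 7 := (finCongr hlen.symm).trans e
  have hσ : ∀ i : Fin 7, σ i = l.get ⟨(i : ℕ), by omega⟩ := fun i => rfl
  have hσ0 : σ 0 = s₁ := rfl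
  have hσ1 : σ 1 = s₂ := rfl
  have hσ2 : σ 2 = t₁ := rfl
  have hσ3 : σ 3 = t₂ := rfl
  set F₀ : Finset (Sym2 (Fin 7)) := F.image (Sym2.map σ.symm) with hF₀
  have hF₀card : F₀.card ≤ 2 := le_trans (Finset.card_image_le) hF
  have hcore := core F₀ hF₀card
  have hadj : ∀ u v : Fin 7,
      ((⊤ : SimpleGraph (Fin 7)).deleteEdges ↑F₀).Adj u v →
      ((⊤ : SimpleGraph (Fin 7)).deleteEdges ↑F).Adj (σ u) (σ v) := by
    intro u v h
    rw [SimpleGraph.deleteEdges_adj] at h ⊢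
    refine ⟨by simpa using σ.injective.ne (by simpa using h.1), ?_⟩
    intro hmem'
    apply h.2
    have : s(u, v) ∈ F₀ := by
      rw [hF₀]
      refine Finset.mem_image.2 ⟨s(σ u, σ v), by simpa using hmem', ?_⟩
      rw [Sym2.map_pair_eq]
      simp
    simpa using this
  have := hasPaired2DPC_map σ hadj hcore
  rwa [hσ0, hσ1, hσ2, hσ3] at this
end

section
/- For n ≥ 3 and k ≥ 1, in BC(n,k), if s₁, s₂, t₁, t₂ lie in four pairwise distinct subgraphs BC[l_{s₁}], BC[l_{s₂}], BC[l_{t₁}], BC[l_{t₂}] and there are no faulty edges, then BC(n,k) contains two vertex-disjoint paths from s₁ to t₁ and from s₂ to t₂ covering all vertices, provided the complete graph K_n on the n subgraph labels admits a paired 2-DPC connecting {l_{s₁}, l_{s₂}} to {l_{t₁}, l_{t₂}} and each BC[m] is Hamiltonian-connected. -/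
open SimpleGraph

/-- The logical graph of BCube(n,k). -/
def BC (n k : ℕ) : SimpleGraph (Fin (k+1) → Fin n) where
  Adj u v := ∃! i, u i ≠ v i
  symm := by
    constructor
    rintro u v ⟨i, hi, hu⟩
    exact ⟨i, hi.symm, fun j hj => hu j hj.symm⟩
  loopless := by
    constructor
    rintro u ⟨i, hi, -⟩
    exact hi rfl

lemma exists_third {n : ℕ} (hn : 3 ≤ n) (x y : Fin n) : ∃ α : Fin n, α ≠ x ∧ α ≠ y := by
  by_contra h
  push_neg at h
  have hsub : (Finset.univ : Finset (Fin n)) ⊆ {x, y} := by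
    intro α _
    rcases Classical.em (α = x) with hx | hx
    · simp [hx]
    · simp [h α hx]
  have hc := Finset.card_le_card hsub
  have h2 : ({x, y} : Finset (Fin n)).card ≤ 2 :=
    (Finset.card_insert_le _ _).trans (by simp)
  simp [Finset.card_univ] at hc
  omega

lemma last_ne_zero {k : ℕ} (hk : 1 ≤ k) : (Fin.last k : Fin (k+1)) ≠ 0 := by
  intro h
  have := congrArg Fin.val h
  simp [Fin.last] at this
  omega

/-- A Hamiltonian path within a single block, mapped into `BC n k`. -/
lemma blockPath {n k : ℕ} (hk : 1 ≤ k)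
    (hHam : ∀ m : Fin n, ∀ x y : ↥{v : Fin (k+1) → Fin n | v (Fin.last k) = m}, x ≠ y →
      ∃ p : ((BC n k).induce {v : Fin (k+1) → Fin n | v (Fin.last k) = m}).Walk x y,
        p.IsHamiltonian)
    (m : Fin n) (s t : Fin (k+1) → Fin n) (hs : s (Fin.last k) = m)
    (ht : t (Fin.last k) = m) (hst : s ≠ t) :
    ∃ p : (BC n k).Walk s t, p.IsPath ∧ ∀ v, v ∈ p.support ↔ v (Fin.last k) = m := by
  have hxy : (⟨s, hs⟩ : ↥{v : Fin (k+1) → Fin n | v (Fin.last k) = m}) ≠ ⟨t, ht⟩ := by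
    intro h; exact hst (congrArg Subtype.val h)
  obtain ⟨p, hp⟩ := hHam m ⟨s, hs⟩ ⟨t, ht⟩ hxy
  have hpPath : p.IsPath := by
    exact hp.isPath
  refine ⟨p.map (SimpleGraph.Embedding.induce _).toHom, ?_, ?_⟩
  · exact p.map_isPath_of_injective Subtype.val_injective hpPath
  · intro v
    show v ∈ (p.map (SimpleGraph.Embedding.induce _).toHom).support ↔ _
    rw [SimpleGraph.Walk.support_map, List.mem_map]
    constructor
    · rintro ⟨x, _, rfl⟩; exact x.2
    · intro hv
      refine ⟨⟨v, hv⟩, ?_, rfl⟩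
      exact hp.mem_support _

lemma key {n k : ℕ} (hn : 3 ≤ n) (hk : 1 ≤ k)
    (hHam : ∀ m : Fin n, ∀ x y : ↥{v : Fin (k+1) → Fin n | v (Fin.last k) = m}, x ≠ y →
      ∃ p : ((BC n k).induce {v : Fin (k+1) → Fin n | v (Fin.last k) = m}).Walk x y,
        p.IsHamiltonian)
    (a b : Fin n) (w : (⊤ : SimpleGraph (Fin n)).Walk a b) :
    w.IsPath → ∀ s t : Fin (k+1) → Fin n, s (Fin.last k) = a → t (Fin.last k) = b →
      s ≠ t → ∃ p : (BC n k).Walk s t, p.IsPath ∧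
        ∀ v, v ∈ p.support ↔ v (Fin.last k) ∈ w.support := by
  induction w with
  | nil =>
    intro _ s t hs ht hst
    obtain ⟨p, hp, hsupp⟩ := blockPath hk hHam _ s t hs ht hst
    exact ⟨p, hp, fun v => by simpa using hsupp v⟩
  | @cons a c b h w' ih =>
    intro hw s t hs ht hst
    rw [SimpleGraph.Walk.cons_isPath_iff] at hw
    obtain ⟨hw', hanot⟩ := hw
    have hac : a ≠ c := h
    obtain ⟨α, hα1, hα2⟩ := exists_third hn (s 0) (t 0)
    set z : Fin (k+1) → Fin n := Function.update s 0 α with hzdef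
    have hz0 : z 0 = α := Function.update_self _ _ _
    have hzlast : z (Fin.last k) = a := by
      rw [hzdef, Function.update_of_ne (last_ne_zero hk)]; exact hs
    have hsz : s ≠ z := by
      intro h'
      have : s 0 = α := by rw [h', hz0]
      exact hα1 this.symm
    set z' : Fin (k+1) → Fin n := Function.update z (Fin.last k) c with hz'def
    have hz'last : z' (Fin.last k) = c := Function.update_self _ _ _
    have hz'0 : z' 0 = α := by
      rw [hz'def, Function.update_of_ne (last_ne_zero hk).symm]; exact hz0
    have hz't : z' ≠ t := by
      intro h'
      have : t 0 = α := by rw [← h', hz'0]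
      exact hα2 this.symm
    have hadj : (BC n k).Adj z z' := by
      refine ⟨Fin.last k, ?_, ?_⟩
      · show z (Fin.last k) ≠ z' (Fin.last k)
        rw [hzlast, hz'last]; exact hac
      · intro j hj
        by_contra hjne
        exact hj (Function.update_of_ne hjne c z).symm
    obtain ⟨P₁, hP₁, hP₁supp⟩ := blockPath hk hHam a s z hs hzlast hsz
    obtain ⟨P₂, hP₂, hP₂supp⟩ := ih hw' z' t hz'last ht hz't
    refine ⟨P₁.append (SimpleGraph.Walk.cons hadj P₂), ?_, ?_⟩
    · rw [SimpleGraph.Walk.isPath_def, SimpleGraph.Walk.support_append,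
        SimpleGraph.Walk.support_cons, List.tail_cons, List.nodup_append]
      refine ⟨hP₁.support_nodup, hP₂.support_nodup, ?_⟩
      intro v hv1 w hv2 hvw
      subst w
      have h1 := (hP₁supp v).mp hv1
      have h2 := (hP₂supp v).mp hv2
      rw [h1] at h2
      exact hanot h2
    · intro v
      rw [SimpleGraph.Walk.support_append, SimpleGraph.Walk.support_cons,
        List.tail_cons, List.mem_append, SimpleGraph.Walk.support_cons,
        List.mem_cons, hP₁supp, hP₂supp]

/-- If `s₁, s₂, t₁, t₂` lie in four pairwise distinct subgraphs `BC[·]` of the fault-free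
`BC(n,k)`, the complete graph on the `n` subgraph labels admits a paired 2-DPC connecting
the corresponding label pairs, and each `BC[m]` is Hamiltonian-connected, then `BC(n,k)`
has a paired 2-DPC connecting `{s₁, s₂}` to `{t₁, t₂}`. -/
theorem stmt18 (n k : ℕ) (hn : 3 ≤ n) (hk : 1 ≤ k)
    (s₁ s₂ t₁ t₂ : Fin (k+1) → Fin n)
    (hdist : [s₁ (Fin.last k), s₂ (Fin.last k), t₁ (Fin.last k), t₂ (Fin.last k)].Nodup)
    (hK : HasPaired2DPC (⊤ : SimpleGraph (Fin n))
      (s₁ (Fin.last k)) (t₁ (Fin.last k)) (s₂ (Fin.last k)) (t₂ (Fin.last k)))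
    (hHam : ∀ m : Fin n, ∀ x y : ↥{v : Fin (k+1) → Fin n | v (Fin.last k) = m}, x ≠ y →
      ∃ p : ((BC n k).induce {v : Fin (k+1) → Fin n | v (Fin.last k) = m}).Walk x y,
        p.IsHamiltonian) :
    HasPaired2DPC (BC n k) s₁ t₁ s₂ t₂ := by
  obtain ⟨p, q, hp, hq, hdisj, hcov⟩ := hK
  simp only [List.nodup_cons, List.mem_cons, List.mem_singleton, List.not_mem_nil] at hdist
  have h11 : s₁ (Fin.last k) ≠ t₁ (Fin.last k) := by tauto
  have h22 : s₂ (Fin.last k) ≠ t₂ (Fin.last k) := by tauto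
  have hs1t1 : s₁ ≠ t₁ := fun h => h11 (by rw [h])
  have hs2t2 : s₂ ≠ t₂ := fun h => h22 (by rw [h])
  obtain ⟨P, hP, hPsupp⟩ := key hn hk hHam _ _ p hp s₁ t₁ rfl rfl hs1t1
  obtain ⟨Q, hQ, hQsupp⟩ := key hn hk hHam _ _ q hq s₂ t₂ rfl rfl hs2t2
  refine ⟨P, Q, hP, hQ, ?_, ?_⟩
  · intro v hv hv'
    exact hdisj _ ((hPsupp v).mp hv) ((hQsupp v).mp hv')
  · intro v
    rcases hcov (v (Fin.last k)) with h | h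
    · exact Or.inl ((hPsupp v).mpr h)
    · exact Or.inr ((hQsupp v).mpr h)
end
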